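/- arXiv:2209.01159 — 5 statements merged into one kernel-verified Lean document; each statement's English description precedes it below -/
import Mathlib

section
/- Hessian determinant at the first-layer padded point (case ii): let p ≥ 1 and let (β⋆,γ⋆) ∈ ℝ^p × ℝ^p be a critical point of E_p whose Hessian H_p at (β⋆,γ⋆) is nonsingular. Let H_{p+1} denote the Hessian of E_{p+1} at the padded point Γ^{p+1}(1,1), and set b = ∂²E_{p+1}/∂β_1∂γ_1 evaluated at Γ^{p+1}(1,1). Then ∂²E_{p+1}/∂β_1² vanishes at Γ^{p+1}(1,1), all mixed second derivatives ∂²E_{p+1}/∂β_m∂β_1 and ∂²E_{p+1}/∂γ_m∂β_1 with m ≥ 2 vanish at Γ^{p+1}(1,1), and if b ≠ 0 then det H_{p+1} = -b² · det H_p. -/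
open Matrix Complex

noncomputable section

/-- Computational basis index set for `n` qubits, identified with `Fin 2 ^ n` via binary digits. -/
abbrev QIdx (n : ℕ) := Fin n → Fin 2

/-- The Pauli X matrix. -/
def pauliX : Matrix (Fin 2) (Fin 2) ℂ := !![0, 1; 1, 0]

/-- The Pauli Z matrix. -/
def pauliZ : Matrix (Fin 2) (Fin 2) ℂ := !![1, 0; 0, -1]

/-- The `n`-fold Kronecker product with `M` in the `i`-th tensor factor and the 2×2 identity in
every other factor, realized as a matrix on `ℂ^(2^n)` with indices `Fin n → Fin 2`. -/
def pauliAt {n : ℕ} (M : Matrix (Fin 2) (Fin 2) ℂ) (i : Fin n) :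
    Matrix (QIdx n) (QIdx n) ℂ :=
  Matrix.of fun s t => ∏ j, if j = i then M (s j) (t j) else if s j = t j then 1 else 0

/-- `σ^x_i`. -/
def sigmaX {n : ℕ} (i : Fin n) : Matrix (QIdx n) (QIdx n) ℂ := pauliAt pauliX i

/-- `σ^z_i`. -/
def sigmaZ {n : ℕ} (i : Fin n) : Matrix (QIdx n) (QIdx n) ℂ := pauliAt pauliZ i

lemma sigmaZ_eq_diagonal {n : ℕ} (i : Fin n) :
    sigmaZ i = Matrix.diagonal (fun s => pauliZ (s i) (s i)) := by
  ext s t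
  simp only [sigmaZ, pauliAt, Matrix.of_apply, Matrix.diagonal_apply]
  by_cases h : s = t
  · subst h
    simp [Finset.prod_ite_eq']
  · rw [if_neg h]
    obtain ⟨j₀, hj₀⟩ := Function.ne_iff.mp h
    refine Finset.prod_eq_zero (Finset.mem_univ j₀) ?_
    by_cases hji : j₀ = i
    · subst hji
      rw [if_pos rfl]
      have hz : ∀ a b : Fin 2, a ≠ b → pauliZ a b = 0 := by
        intro a b hab
        fin_cases a <;> fin_cases b <;> simp_all [pauliZ]
      exact hz _ _ hj₀
    · rw [if_neg hji, if_neg hj₀]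

lemma sigmaZ_mul_comm {n : ℕ} (i j : Fin n) : sigmaZ i * sigmaZ j = sigmaZ j * sigmaZ i := by
  rw [sigmaZ_eq_diagonal, sigmaZ_eq_diagonal, Matrix.diagonal_mul_diagonal,
    Matrix.diagonal_mul_diagonal]
  ext s
  simp [mul_comm]

/-- The MaxCut Hamiltonian `H_C = Σ_{{i,j} ∈ E} σ^z_i σ^z_j`. -/
def hamC (n : ℕ) (G : SimpleGraph (Fin n)) [DecidableRel G.Adj] :
    Matrix (QIdx n) (QIdx n) ℂ :=
  ∑ e ∈ G.edgeFinset,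
    Sym2.lift ⟨fun i j => sigmaZ i * sigmaZ j, fun i j => sigmaZ_mul_comm i j⟩ e

/-- The mixing Hamiltonian `H_B = -Σ_i σ^x_i`. -/
def hamB (n : ℕ) : Matrix (QIdx n) (QIdx n) ℂ := -(∑ i : Fin n, sigmaX i)

/-- `U_B(β) = exp(-i β H_B)`. -/
def uB (n : ℕ) (β : ℝ) : Matrix (QIdx n) (QIdx n) ℂ :=
  NormedSpace.exp ((-(Complex.I) * (β : ℂ)) • hamB n)

/-- `U_C(γ) = exp(-i γ H_C)`. -/
def uC (n : ℕ) (G : SimpleGraph (Fin n)) [DecidableRel G.Adj] (γ : ℝ) :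
    Matrix (QIdx n) (QIdx n) ℂ :=
  NormedSpace.exp ((-(Complex.I) * (γ : ℂ)) • hamC n G)

/-- The plus state `|+⟩ = 2^{-n/2} (1,…,1)ᵀ`. -/
def plusState (n : ℕ) : QIdx n → ℂ := fun _ => ((Real.sqrt 2 : ℂ))⁻¹ ^ n

/-- The `m`-th layer `U_B(β_{m+1}) U_C(γ_{m+1})` of the QAOA circuit (`m` is 0-indexed);
`1` if `m` is out of range. -/
def qaoaLayer (n : ℕ) (G : SimpleGraph (Fin n)) [DecidableRel G.Adj] {p : ℕ}
    (β γ : Fin p → ℝ) (m : ℕ) : Matrix (QIdx n) (QIdx n) ℂ :=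
  if h : m < p then uB n (β ⟨m, h⟩) * uC n G (γ ⟨m, h⟩) else 1

/-- The ordered product of the (0-indexed) layers `a, a+1, …, a+len-1` of the QAOA circuit, with
higher layers acting later (to the left). -/
def uProd (n : ℕ) (G : SimpleGraph (Fin n)) [DecidableRel G.Adj] {p : ℕ}
    (β γ : Fin p → ℝ) (a len : ℕ) : Matrix (QIdx n) (QIdx n) ℂ :=
  (((List.range' a len).reverse).map (qaoaLayer n G β γ)).prod

/-- The depth-`p` QAOA state `|β,γ⟩ = U_B(β_p) U_C(γ_p) ⋯ U_B(β_1) U_C(γ_1) |+⟩`. -/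
def qaoaState (n : ℕ) (G : SimpleGraph (Fin n)) [DecidableRel G.Adj] {p : ℕ}
    (β γ : Fin p → ℝ) : QIdx n → ℂ :=
  (uProd n G β γ 0 p).mulVec (plusState n)

/-- The depth-`p` QAOA cost function `E_p(β,γ) = ⟨β,γ| H_C |β,γ⟩` as a real-valued function on
`ℝ^p × ℝ^p`. -/
def energyE (n : ℕ) (G : SimpleGraph (Fin n)) [DecidableRel G.Adj] (p : ℕ)
    (x : (Fin p → ℝ) × (Fin p → ℝ)) : ℝ :=
  (star (qaoaState n G x.1 x.2) ⬝ᵥ (hamC n G).mulVec (qaoaState n G x.1 x.2)).re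

/-- The point `Γ^{p+1}(i,j)` obtained from `(β⋆,γ⋆) ∈ ℝ^p × ℝ^p` by inserting a `0` at
position `i` in the `β`-part and at position `j` in the `γ`-part. -/
def padded {p : ℕ} (x : (Fin p → ℝ) × (Fin p → ℝ)) (i j : Fin (p + 1)) :
    (Fin (p + 1) → ℝ) × (Fin (p + 1) → ℝ) :=
  (i.insertNth 0 x.1, j.insertNth 0 x.2)

/-- The coordinate direction in `ℝ^p × ℝ^p` corresponding to `β_l` (`Sum.inl l`) or
`γ_l` (`Sum.inr l`). -/
def coordDir {p : ℕ} : Fin p ⊕ Fin p → (Fin p → ℝ) × (Fin p → ℝ) :=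
  Sum.elim (fun l => (Pi.single l 1, 0)) (fun l => (0, Pi.single l 1))

/-- Partial derivative of a real function on `ℝ^p × ℝ^p` in the coordinate direction `a`. -/
def pderiv' {p : ℕ} (f : ((Fin p → ℝ) × (Fin p → ℝ)) → ℝ)
    (a : Fin p ⊕ Fin p) (x : (Fin p → ℝ) × (Fin p → ℝ)) : ℝ :=
  fderiv ℝ f x (coordDir a)

/-- The Hessian matrix of a real function on `ℝ^p × ℝ^p`, with rows and columns indexed by the
coordinates `β_1,…,β_p` (`Sum.inl`) and `γ_1,…,γ_p` (`Sum.inr`). -/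
def hessian {p : ℕ} (f : ((Fin p → ℝ) × (Fin p → ℝ)) → ℝ)
    (x : (Fin p → ℝ) × (Fin p → ℝ)) : Matrix (Fin p ⊕ Fin p) (Fin p ⊕ Fin p) ℝ :=
  Matrix.of fun a b => pderiv' (pderiv' f b) a x

/-- The commutator `[A, B] = AB - BA`. -/
def commMat {n : ℕ} (A B : Matrix (QIdx n) (QIdx n) ℂ) : Matrix (QIdx n) (QIdx n) ℂ :=
  A * B - B * A

end


noncomputable section AuxProofs
open NormedSpace

attribute [local instance] Matrix.linftyOpNormedAddCommGroup Matrix.linftyOpNormedRing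
  Matrix.linftyOpNormedAlgebra

lemma contDiff_exp_param {n : ℕ} (A : Matrix (QIdx n) (QIdx n) ℂ) :
    ContDiff ℝ ⊤ (fun t : ℝ => NormedSpace.exp ((-(Complex.I) * (t : ℂ)) • A)) := by
  have h1 : ContDiff ℂ ⊤ (NormedSpace.exp : Matrix (QIdx n) (QIdx n) ℂ → _) := by
    rw [contDiff_iff_contDiffAt]
    intro x
    exact (analyticAt_exp_of_mem_ball x (by simp [expSeries_radius_eq_top])).contDiffAt
  have h2 : ContDiff ℝ ⊤ (fun t : ℝ => t • ((-(Complex.I)) • A)) :=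
    (contDiff_id.smul contDiff_const)
  have h3 := (h1.restrict_scalars ℝ).comp h2
  have heq : (fun t : ℝ => NormedSpace.exp ((-(Complex.I) * (t : ℂ)) • A))
      = (NormedSpace.exp : Matrix (QIdx n) (QIdx n) ℂ → _) ∘ (fun t : ℝ => t • ((-(Complex.I)) • A)) := by
    funext t
    congr 1
    show _ = t • ((-(Complex.I)) • A)
    rw [← smul_assoc]
    norm_num [Complex.real_smul, mul_comm]
  rw [heq]; exact h3

variable {n : ℕ} (G : SimpleGraph (Fin n)) [DecidableRel G.Adj]

lemma contDiff_uB : ContDiff ℝ ⊤ (uB n) := contDiff_exp_param _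

lemma contDiff_uC : ContDiff ℝ ⊤ (uC n G) := contDiff_exp_param _

/-- Entry evaluation as a continuous linear map. -/
def entryCLM (s t : QIdx n) : Matrix (QIdx n) (QIdx n) ℂ →L[ℝ] ℂ :=
  LinearMap.toContinuousLinearMap
    { toFun := fun A => A s t
      map_add' := fun _ _ => rfl
      map_smul' := fun _ _ => rfl }

lemma ContDiff.matrix_entry {p : ℕ} {f : ((Fin p → ℝ) × (Fin p → ℝ)) → Matrix (QIdx n) (QIdx n) ℂ}
    (hf : ContDiff ℝ ⊤ f) (s t : QIdx n) : ContDiff ℝ ⊤ (fun x => f x s t) :=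
  (entryCLM s t).contDiff.comp hf

lemma contDiff_qaoaLayer {p : ℕ} (m : ℕ) :
    ContDiff ℝ ⊤ (fun x : (Fin p → ℝ) × (Fin p → ℝ) => qaoaLayer n G x.1 x.2 m) := by
  unfold qaoaLayer
  by_cases h : m < p
  · simp only [dif_pos h]
    exact ((contDiff_uB).comp ((contDiff_apply ℝ ℝ (⟨m, h⟩ : Fin p)).comp contDiff_fst)).mul
      ((contDiff_uC G).comp ((contDiff_apply ℝ ℝ (⟨m, h⟩ : Fin p)).comp contDiff_snd))
  · simp only [dif_neg h]; exact contDiff_const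

lemma uProd_succ {p : ℕ} (β γ : Fin p → ℝ) (a len : ℕ) :
    uProd n G β γ a (len + 1) = qaoaLayer n G β γ (a + len) * uProd n G β γ a len := by
  unfold uProd
  rw [List.range'_concat]
  simp

lemma contDiff_uProd {p : ℕ} (a len : ℕ) :
    ContDiff ℝ ⊤ (fun x : (Fin p → ℝ) × (Fin p → ℝ) => uProd n G x.1 x.2 a len) := by
  induction len with
  | zero => simp only [uProd, List.range', List.reverse_nil, List.map_nil, List.prod_nil]
            exact contDiff_const
  | succ len ih =>
    simp only [uProd_succ]
    exact (contDiff_qaoaLayer G (a + len)).mul ih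

lemma contDiff_qaoaState_entry {p : ℕ} (s : QIdx n) :
    ContDiff ℝ ⊤ (fun x : (Fin p → ℝ) × (Fin p → ℝ) => qaoaState n G x.1 x.2 s) := by
  unfold qaoaState
  simp only [Matrix.mulVec, dotProduct]
  exact ContDiff.sum fun t _ => ((contDiff_uProd G 0 p).matrix_entry s t).mul contDiff_const

lemma contDiff_energyE (p : ℕ) : ContDiff ℝ ⊤ (energyE n G p) := by
  unfold energyE
  have : ∀ x : (Fin p → ℝ) × (Fin p → ℝ),
      (star (qaoaState n G x.1 x.2) ⬝ᵥ (hamC n G).mulVec (qaoaState n G x.1 x.2)).re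
      = Complex.reCLM (∑ s, (starRingEnd ℂ) (qaoaState n G x.1 x.2 s) *
          (∑ t, hamC n G s t * qaoaState n G x.1 x.2 t)) := by
    intro x
    simp [dotProduct, Matrix.mulVec, RCLike.star_def]
  simp only [this]
  apply Complex.reCLM.contDiff.comp
  apply ContDiff.sum
  intro s _
  refine ContDiff.mul ?_ (ContDiff.sum fun t _ => contDiff_const.mul (contDiff_qaoaState_entry G t))
  exact Complex.conjCLE.contDiff.comp (contDiff_qaoaState_entry G s)

lemma sigmaX_mulVec_const {n : ℕ} (i : Fin n) (c : ℂ) :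
    (sigmaX i).mulVec (fun _ => c) = (fun _ => c) := by
  funext s
  simp only [sigmaX, pauliAt, Matrix.mulVec, dotProduct, Matrix.of_apply]
  rw [← Finset.sum_mul]
  have h1 : (∑ t : QIdx n, ∏ j, (if j = i then pauliX (s j) (t j) else if s j = t j then 1 else 0))
      = ∏ j, ∑ b : Fin 2, (if j = i then pauliX (s j) b else if s j = b then 1 else 0) := by
    rw [Fintype.prod_sum]
  rw [h1]
  have h2 : ∀ j : Fin n,
      (∑ b : Fin 2, (if j = i then pauliX (s j) b else if s j = b then 1 else 0)) = 1 := by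
    intro j
    by_cases hj : j = i
    · simp only [if_pos hj, Fin.sum_univ_two]
      generalize s j = a
      fin_cases a <;> norm_num [pauliX]
    · simp only [if_neg hj, Fin.sum_univ_two]
      generalize s j = a
      fin_cases a <;> norm_num
  simp only [h2, Finset.prod_const_one, one_mul]

/-- `mulVec` at a fixed vector, as a continuous linear map. -/
def mulVecCLM {n : ℕ} (v : QIdx n → ℂ) : Matrix (QIdx n) (QIdx n) ℂ →L[ℂ] (QIdx n → ℂ) :=
  LinearMap.toContinuousLinearMap
    { toFun := fun M => M.mulVec v
      map_add' := fun A B => Matrix.add_mulVec A B v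
      map_smul' := fun c A => Matrix.smul_mulVec c A v }

lemma hamB_mulVec_plus (n : ℕ) :
    (hamB n).mulVec (plusState n) = (-(n : ℂ)) • plusState n := by
  unfold hamB plusState
  rw [Matrix.neg_mulVec]
  have : (∑ i : Fin n, sigmaX i).mulVec (fun _ : QIdx n => ((Real.sqrt 2 : ℂ))⁻¹ ^ n)
      = (n : ℂ) • (fun _ : QIdx n => ((Real.sqrt 2 : ℂ))⁻¹ ^ n) := by
    have hm : (∑ i : Fin n, sigmaX i).mulVec (fun _ : QIdx n => ((Real.sqrt 2 : ℂ))⁻¹ ^ n)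
        = ∑ i : Fin n, (sigmaX i).mulVec (fun _ : QIdx n => ((Real.sqrt 2 : ℂ))⁻¹ ^ n) :=
      map_sum (mulVecCLM _) _ _
    rw [hm]
    simp only [sigmaX_mulVec_const]
    funext s
    simp [Finset.sum_const]
  rw [this]
  funext s
  simp

lemma exp_mulVec_eigen {n : ℕ} (A : Matrix (QIdx n) (QIdx n) ℂ) (v : QIdx n → ℂ) (c : ℂ)
    (h : A.mulVec v = c • v) :
    (NormedSpace.exp A).mulVec v = Complex.exp c • v := by
  have hpow : ∀ k : ℕ, (A ^ k).mulVec v = (c ^ k) • v := by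
    intro k; induction k with
    | zero => simp [Matrix.one_mulVec]
    | succ k ih =>
      rw [pow_succ, pow_succ, ← Matrix.mulVec_mulVec, h, Matrix.mulVec_smul, ih, smul_smul,
        mul_comm]
  have h0 : (NormedSpace.exp A).mulVec v = mulVecCLM v (NormedSpace.exp A) := rfl
  rw [h0, exp_eq_tsum ℂ]
  beta_reduce
  rw [ContinuousLinearMap.map_tsum (mulVecCLM v) (expSeries_summable' (𝕂 := ℂ) A)]
  have h1 : ∀ k : ℕ, mulVecCLM v (((k.factorial : ℂ))⁻¹ • A ^ k)
      = (((k.factorial : ℂ))⁻¹ * c ^ k) • v := by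
    intro k
    rw [_root_.map_smul]
    show (((k.factorial : ℂ))⁻¹ : ℂ) • (A ^ k).mulVec v = _
    rw [hpow k, smul_smul]
  rw [tsum_congr h1, Summable.tsum_smul_const]
  · congr 1
    rw [Complex.exp_eq_exp_ℂ, exp_eq_tsum ℂ]
    refine tsum_congr fun k => ?_
    exact (smul_eq_mul _ _).symm
  · have := expSeries_summable' (𝕂 := ℂ) c
    simpa [smul_eq_mul] using this

lemma uB_mulVec_plus (n : ℕ) (t : ℝ) :
    (uB n t).mulVec (plusState n) = Complex.exp (Complex.I * n * t) • plusState n := by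
  unfold uB
  rw [exp_mulVec_eigen _ _ (Complex.I * n * t)]
  rw [Matrix.smul_mulVec, hamB_mulVec_plus, smul_smul]
  ring_nf

lemma uB_zero (n : ℕ) : uB n 0 = 1 := by
  unfold uB
  norm_num [exp_zero]

lemma uC_zero (n : ℕ) (G : SimpleGraph (Fin n)) [DecidableRel G.Adj] : uC n G 0 = 1 := by
  unfold uC
  norm_num [exp_zero]

lemma qaoaLayer_cons {p : ℕ} (t : ℝ) (β γ : Fin p → ℝ) (m : ℕ) :
    qaoaLayer n G (Fin.cons t β) (Fin.cons 0 γ) (m + 1) = qaoaLayer n G β γ m := by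
  unfold qaoaLayer
  by_cases h : m < p
  · rw [dif_pos (by omega : m + 1 < p + 1), dif_pos h]
    have h1 : (⟨m + 1, by omega⟩ : Fin (p + 1)) = Fin.succ ⟨m, h⟩ := rfl
    rw [h1, Fin.cons_succ, Fin.cons_succ]
  · rw [dif_neg (by omega), dif_neg h]

lemma uProd_cons {p : ℕ} (t : ℝ) (β γ : Fin p → ℝ) (a len : ℕ) :
    uProd n G (Fin.cons t β) (Fin.cons 0 γ) (a + 1) len = uProd n G β γ a len := by
  induction len with
  | zero => rfl
  | succ len ih =>
    rw [uProd_succ, uProd_succ, ih]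
    congr 1
    rw [show a + 1 + len = a + len + 1 by omega, qaoaLayer_cons]

lemma uProd_split_bottom {p : ℕ} (β γ : Fin p → ℝ) (a len : ℕ) :
    uProd n G β γ a (len + 1) = uProd n G β γ (a + 1) len * qaoaLayer n G β γ a := by
  induction len with
  | zero =>
    rw [uProd_succ]
    show qaoaLayer n G β γ (a + 0) * uProd n G β γ a 0 = uProd n G β γ (a + 1) 0 * _
    have h1 : uProd n G β γ a 0 = 1 := rfl
    have h2 : uProd n G β γ (a + 1) 0 = 1 := rfl
    rw [h1, h2, mul_one, one_mul, Nat.add_zero]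
  | succ len ih =>
    rw [uProd_succ, ih, ← mul_assoc, show a + (len + 1) = a + 1 + len by omega, ← uProd_succ]

lemma qaoaState_cons {p : ℕ} (t : ℝ) (β γ : Fin p → ℝ) :
    qaoaState n G (Fin.cons t β) (Fin.cons 0 γ)
      = Complex.exp (Complex.I * n * t) • qaoaState n G β γ := by
  unfold qaoaState
  rw [uProd_split_bottom, ← Matrix.mulVec_mulVec]
  have hl : qaoaLayer n G (Fin.cons t β) (Fin.cons 0 γ) 0 = uB n t := by
    unfold qaoaLayer
    rw [dif_pos (Nat.succ_pos p)]
    have hb : (Fin.cons t β : Fin (p + 1) → ℝ) ⟨0, Nat.succ_pos p⟩ = t := rfl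
    have hc : (Fin.cons (0 : ℝ) γ : Fin (p + 1) → ℝ) ⟨0, Nat.succ_pos p⟩ = 0 := rfl
    rw [hb, hc, uC_zero, mul_one]
  rw [hl, uB_mulVec_plus, Matrix.mulVec_smul, uProd_cons]

lemma energy_cons {p : ℕ} (t : ℝ) (β γ : Fin p → ℝ) :
    energyE n G (p + 1) (Fin.cons t β, Fin.cons 0 γ) = energyE n G p (β, γ) := by
  unfold energyE
  simp only [qaoaState_cons]
  congr 1
  rw [star_smul, Matrix.mulVec_smul, smul_dotProduct, dotProduct_smul, smul_smul]
  have h1 : star (Complex.exp (Complex.I * n * t)) * Complex.exp (Complex.I * n * t) = 1 := by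
    rw [RCLike.star_def, ← Complex.exp_conj, ← Complex.exp_add]
    have h2 : (starRingEnd ℂ) (Complex.I * n * t) + Complex.I * n * t = 0 := by
      simp only [_root_.map_mul, Complex.conj_I, Complex.conj_natCast, Complex.conj_ofReal]
      ring
    rw [h2, Complex.exp_zero]
  rw [h1, one_smul]

lemma fderiv_dir_eq_zero {X : Type*} [NormedAddCommGroup X] [NormedSpace ℝ X]
    {f : X → ℝ} {x v : X} (hf : DifferentiableAt ℝ f x)
    (hc : ∀ t : ℝ, f (x + t • v) = f x) : fderiv ℝ f x v = 0 := by
  have hline : HasDerivAt (fun t : ℝ => x + t • v) v 0 := by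
    simpa using ((hasDerivAt_id (0 : ℝ)).smul_const v).const_add x
  have hfd : HasFDerivAt f (fderiv ℝ f x) ((fun t : ℝ => x + t • v) 0) := by
    simpa using hf.hasFDerivAt
  have h1 := hfd.comp_hasDerivAt 0 hline
  have h2 : (f ∘ fun t : ℝ => x + t • v) = fun _ => f x := funext fun t => hc t
  rw [h2] at h1
  have h3 := h1.unique (hasDerivAt_const 0 (f x))
  simpa using h3

lemma diff_pderiv' {q : ℕ} (f : ((Fin q → ℝ) × (Fin q → ℝ)) → ℝ) (hf : ContDiff ℝ ⊤ f)
    (c : Fin q ⊕ Fin q) : Differentiable ℝ (pderiv' f c) := by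
  unfold pderiv'
  have h1 : Differentiable ℝ (fderiv ℝ f) := (hf.fderiv_right (m := ⊤) le_top).differentiable (by simp)
  exact fun x => (h1 x).clm_apply (differentiableAt_const _)

lemma pderiv'_symm {q : ℕ} (f : ((Fin q → ℝ) × (Fin q → ℝ)) → ℝ) (hf : ContDiff ℝ ⊤ f)
    (a c : Fin q ⊕ Fin q) (x : (Fin q → ℝ) × (Fin q → ℝ)) :
    pderiv' (pderiv' f c) a x = pderiv' (pderiv' f a) c x := by
  have hd : Differentiable ℝ (fderiv ℝ f) := (hf.fderiv_right (m := ⊤) le_top).differentiable (by simp)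
  have key : ∀ (v w : (Fin q → ℝ) × (Fin q → ℝ)),
      fderiv ℝ (fun y => fderiv ℝ f y w) x v = fderiv ℝ (fderiv ℝ f) x v w := by
    intro v w
    rw [fderiv_clm_apply (hd x) (differentiableAt_const w)]
    simp
  unfold pderiv'
  rw [key, key, (hf.contDiffAt.isSymmSndFDerivAt le_top).eq]

/-- `Fin.cons 0` as a linear map. -/
def consLM (q : ℕ) : (Fin q → ℝ) →ₗ[ℝ] (Fin (q + 1) → ℝ) where
  toFun := fun v => Fin.cons (0 : ℝ) v
  map_add' v w := by
    funext i
    refine Fin.cases ?_ (fun j => ?_) i <;> simp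
  map_smul' c v := by
    funext i
    refine Fin.cases ?_ (fun j => ?_) i <;> simp

/-- The padding map as a continuous linear map. -/
def padCLM (q : ℕ) :
    ((Fin q → ℝ) × (Fin q → ℝ)) →L[ℝ] ((Fin (q + 1) → ℝ) × (Fin (q + 1) → ℝ)) :=
  LinearMap.toContinuousLinearMap ((consLM q).prodMap (consLM q))

lemma padCLM_apply {q : ℕ} (x : (Fin q → ℝ) × (Fin q → ℝ)) :
    padCLM q x = (Fin.cons 0 x.1, Fin.cons 0 x.2) := rfl

lemma cons_single {q : ℕ} (l : Fin q) (c : ℝ) :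
    (Fin.cons 0 (Pi.single l c) : Fin (q + 1) → ℝ) = Pi.single l.succ c := by
  funext i
  refine Fin.cases ?_ (fun j => ?_) i
  · simp [Pi.single_eq_of_ne (Fin.succ_ne_zero l).symm]
  · simp [Pi.single_apply, Fin.succ_inj]

lemma coordDir_inl {q : ℕ} (l : Fin q) :
    (coordDir (Sum.inl l) : (Fin q → ℝ) × (Fin q → ℝ)) = (Pi.single l 1, 0) := rfl

lemma coordDir_inr {q : ℕ} (l : Fin q) :
    (coordDir (Sum.inr l) : (Fin q → ℝ) × (Fin q → ℝ)) = (0, Pi.single l 1) := rfl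

lemma cons_zero_fun {q : ℕ} : (Fin.cons (0 : ℝ) (0 : Fin q → ℝ)) = (0 : Fin (q + 1) → ℝ) := by
  funext i
  refine Fin.cases ?_ (fun j => ?_) i <;> simp

lemma padCLM_coordDir {q : ℕ} (a : Fin q ⊕ Fin q) :
    padCLM q (coordDir a) = coordDir (Sum.map Fin.succ Fin.succ a) := by
  cases a with
  | inl l =>
    rw [Sum.map_inl, coordDir_inl, coordDir_inl, padCLM_apply]
    exact Prod.ext (cons_single l 1) cons_zero_fun
  | inr l =>
    rw [Sum.map_inr, coordDir_inr, coordDir_inr, padCLM_apply]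
    exact Prod.ext cons_zero_fun (cons_single l 1)

lemma energy_comp_pad (p : ℕ) :
    energyE n G (p + 1) ∘ (padCLM p) = energyE n G p := by
  funext x
  simp only [Function.comp_apply, padCLM_apply]
  exact energy_cons G 0 x.1 x.2

lemma pderiv_pad (p : ℕ) (c : Fin p ⊕ Fin p) (x : (Fin p → ℝ) × (Fin p → ℝ)) :
    pderiv' (energyE n G (p + 1)) (Sum.map Fin.succ Fin.succ c) (padCLM p x)
      = pderiv' (energyE n G p) c x := by
  unfold pderiv'
  rw [← padCLM_coordDir]
  have hE1 := (contDiff_energyE G (p + 1)).differentiable (by simp)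
  have hcomp : fderiv ℝ (energyE n G (p + 1) ∘ (padCLM p)) x
      = (fderiv ℝ (energyE n G (p + 1)) (padCLM p x)).comp (padCLM p) :=
    ((hE1 (padCLM p x)).hasFDerivAt.comp x (padCLM p).hasFDerivAt).fderiv
  rw [energy_comp_pad] at hcomp
  rw [hcomp]
  rfl

lemma pderiv2_pad (p : ℕ) (a c : Fin p ⊕ Fin p) (x : (Fin p → ℝ) × (Fin p → ℝ)) :
    pderiv' (pderiv' (energyE n G (p + 1)) (Sum.map Fin.succ Fin.succ c))
        (Sum.map Fin.succ Fin.succ a) (padCLM p x)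
      = pderiv' (pderiv' (energyE n G p) c) a x := by
  have hdiff := diff_pderiv' _ (contDiff_energyE G (p + 1)) (Sum.map Fin.succ Fin.succ c)
  have hcomp2 : (pderiv' (energyE n G (p + 1)) (Sum.map Fin.succ Fin.succ c)) ∘ (padCLM p)
      = pderiv' (energyE n G p) c := funext fun y => pderiv_pad G p c y
  show fderiv ℝ (pderiv' (energyE n G (p + 1)) (Sum.map Fin.succ Fin.succ c)) (padCLM p x)
      (coordDir (Sum.map Fin.succ Fin.succ a)) = _
  rw [← padCLM_coordDir]
  have hcomp : fderiv ℝ ((pderiv' (energyE n G (p + 1)) (Sum.map Fin.succ Fin.succ c))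
        ∘ (padCLM p)) x
      = (fderiv ℝ (pderiv' (energyE n G (p + 1)) (Sum.map Fin.succ Fin.succ c))
          (padCLM p x)).comp (padCLM p) :=
    ((hdiff (padCLM p x)).hasFDerivAt.comp x (padCLM p).hasFDerivAt).fderiv
  rw [hcomp2] at hcomp
  rw [show pderiv' (pderiv' (energyE n G p) c) a x
      = fderiv ℝ (pderiv' (energyE n G p) c) x (coordDir a) from rfl, hcomp]
  rfl

lemma dE1_dbeta1_zero (p : ℕ) (y : (Fin (p + 1) → ℝ) × (Fin (p + 1) → ℝ)) (hy : y.2 0 = 0) :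
    pderiv' (energyE n G (p + 1)) (Sum.inl 0) y = 0 := by
  have hrep : ∀ s : ℝ, y + s • (coordDir (Sum.inl (0 : Fin (p + 1))))
      = (Fin.cons (y.1 0 + s) (Fin.tail y.1), Fin.cons 0 (Fin.tail y.2)) := by
    intro s
    rw [coordDir_inl]
    refine Prod.ext ?_ ?_
    · simp only [Prod.fst_add, Prod.smul_fst]
      funext i
      refine Fin.cases ?_ (fun j => ?_) i
      · simp
      · simp [Pi.single_eq_of_ne (Fin.succ_ne_zero j), Fin.tail]
    · simp only [Prod.snd_add, Prod.smul_snd]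
      funext i
      refine Fin.cases ?_ (fun j => ?_) i
      · simpa using hy
      · simp [Fin.tail]
  have hy' : y = (Fin.cons (y.1 0) (Fin.tail y.1), Fin.cons 0 (Fin.tail y.2)) := by
    refine Prod.ext (Fin.cons_self_tail y.1).symm ?_
    rw [← hy]
    exact (Fin.cons_self_tail y.2).symm
  show fderiv ℝ (energyE n G (p + 1)) y (coordDir (Sum.inl 0)) = 0
  apply fderiv_dir_eq_zero ((contDiff_energyE G (p + 1)).differentiable (by simp) y)
  intro t
  rw [hrep t, energy_cons]
  conv_rhs => rw [hy']
  rw [energy_cons]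

lemma claim2gen (p : ℕ) (y v : (Fin (p + 1) → ℝ) × (Fin (p + 1) → ℝ))
    (hy : y.2 0 = 0) (hv : v.2 0 = 0) :
    fderiv ℝ (pderiv' (energyE n G (p + 1)) (Sum.inl 0)) y v = 0 := by
  apply fderiv_dir_eq_zero (diff_pderiv' _ (contDiff_energyE G (p + 1)) (Sum.inl 0) y)
  intro t
  rw [dE1_dbeta1_zero G p _ (by simp [hy, hv]), dE1_dbeta1_zero G p _ hy]

/-- The blockwise reindexing equivalence. -/
def blockEquiv (q : ℕ) : (Fin 2 ⊕ (Fin q ⊕ Fin q)) ≃ (Fin (q + 1) ⊕ Fin (q + 1)) where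
  toFun := Sum.elim (![Sum.inl 0, Sum.inr 0]) (Sum.map Fin.succ Fin.succ)
  invFun := Sum.elim
    (fun i => Fin.cases (Sum.inl 0) (fun j => Sum.inr (Sum.inl j)) i)
    (fun i => Fin.cases (Sum.inl 1) (fun j => Sum.inr (Sum.inr j)) i)
  left_inv := by
    rintro (i | (j | j))
    · fin_cases i <;> simp
    · simp
    · simp
  right_inv := by
    rintro (i | i) <;> refine Fin.cases ?_ (fun j => ?_) i <;> simp

lemma det_aux {q : ℕ} (H : Matrix (Fin (q + 1) ⊕ Fin (q + 1)) (Fin (q + 1) ⊕ Fin (q + 1)) ℝ)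
    (D : Matrix (Fin q ⊕ Fin q) (Fin q ⊕ Fin q) ℝ) (b : ℝ) (hb : b ≠ 0)
    (h00 : H (Sum.inl 0) (Sum.inl 0) = 0)
    (h01 : H (Sum.inl 0) (Sum.inr 0) = b)
    (h10 : H (Sum.inr 0) (Sum.inl 0) = b)
    (hrow : ∀ c, H (Sum.inl 0) (Sum.map Fin.succ Fin.succ c) = 0)
    (hcol : ∀ a, H (Sum.map Fin.succ Fin.succ a) (Sum.inl 0) = 0)
    (hblock : ∀ a c, H (Sum.map Fin.succ Fin.succ a) (Sum.map Fin.succ Fin.succ c) = D a c) :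
    H.det = -b ^ 2 * D.det := by
  have hdet : (H.submatrix (blockEquiv q) (blockEquiv q)).det = H.det :=
    Matrix.det_submatrix_equiv_self (blockEquiv q) H
  rw [← hdet]
  set M := H.submatrix ⇑(blockEquiv q) ⇑(blockEquiv q) with hM
  have he1 : ∀ i : Fin 2, (blockEquiv q) (Sum.inl i)
      = (![Sum.inl 0, Sum.inr 0] : Fin 2 → Fin (q + 1) ⊕ Fin (q + 1)) i := fun _ => rfl
  have he2 : ∀ a : Fin q ⊕ Fin q, (blockEquiv q) (Sum.inr a) = Sum.map Fin.succ Fin.succ a :=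
    fun _ => rfl
  have hA : M.toBlocks₁₁ = !![0, b; b, H (Sum.inr 0) (Sum.inr 0)] := by
    ext i j
    fin_cases i <;> fin_cases j <;>
      simp [Matrix.toBlocks₁₁, hM, Matrix.submatrix_apply, he1, h00, h01, h10]
  have hAdet : M.toBlocks₁₁.det = -b ^ 2 := by
    rw [hA, Matrix.det_fin_two_of]
    ring
  haveI : Invertible M.toBlocks₁₁ :=
    M.toBlocks₁₁.invertibleOfIsUnitDet
      (by rw [hAdet]; exact isUnit_iff_ne_zero.mpr (neg_ne_zero.mpr (pow_ne_zero 2 hb)))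
  have hB0 : ∀ c, M.toBlocks₁₂ 0 c = 0 := fun c => hrow c
  have hC0 : ∀ a, M.toBlocks₂₁ a 0 = 0 := fun a => hcol a
  have hinv11 : (M.toBlocks₁₁)⁻¹ 1 1 = 0 := by
    rw [hA, Matrix.inv_def, Matrix.adjugate_fin_two]
    simp
  have hzero : M.toBlocks₂₁ * ⅟(M.toBlocks₁₁) * M.toBlocks₁₂ = 0 := by
    ext a c
    simp [Matrix.mul_apply, Fin.sum_univ_two, hB0, hC0, hinv11]
  have hD2 : M.toBlocks₂₂ = D := by
    ext a c
    exact hblock a c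
  calc M.det
      = (Matrix.fromBlocks M.toBlocks₁₁ M.toBlocks₁₂ M.toBlocks₂₁ M.toBlocks₂₂).det := by
        rw [Matrix.fromBlocks_toBlocks]
    _ = M.toBlocks₁₁.det * (M.toBlocks₂₂ - M.toBlocks₂₁ * ⅟(M.toBlocks₁₁) * M.toBlocks₁₂).det :=
        Matrix.det_fromBlocks₁₁ _ _ _ _
    _ = -b ^ 2 * D.det := by rw [hzero, sub_zero, hAdet, hD2]

end AuxProofs

/-- Hessian determinant at the first-layer padded point (case ii). -/
theorem stmt9 (n : ℕ) (hn : 1 ≤ n) (G : SimpleGraph (Fin n)) [DecidableRel G.Adj]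
    (p : ℕ) (hp : 1 ≤ p) (β γ : Fin p → ℝ)
    (hcrit : fderiv ℝ (energyE n G p) (β, γ) = 0)
    (hns : (hessian (energyE n G p) (β, γ)).det ≠ 0) :
    let Γ := padded (β, γ) 0 0
    let b := pderiv' (pderiv' (energyE n G (p + 1)) (Sum.inr 0)) (Sum.inl 0) Γ
    pderiv' (pderiv' (energyE n G (p + 1)) (Sum.inl 0)) (Sum.inl 0) Γ = 0 ∧
    (∀ m : Fin (p + 1), m ≠ 0 →
      pderiv' (pderiv' (energyE n G (p + 1)) (Sum.inl 0)) (Sum.inl m) Γ = 0 ∧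
      pderiv' (pderiv' (energyE n G (p + 1)) (Sum.inl 0)) (Sum.inr m) Γ = 0) ∧
    (b ≠ 0 →
      (hessian (energyE n G (p + 1)) Γ).det = -b ^ 2 * (hessian (energyE n G p) (β, γ)).det) := by
  intro Γ b
  have hcd := contDiff_energyE G (p + 1)
  have hΓpad : Γ = padCLM p (β, γ) := by
    show padded (β, γ) 0 0 = _
    rw [padCLM_apply]
    unfold padded
    refine Prod.ext ?_ ?_ <;> simp [Fin.insertNth_zero']
  have hΓ2 : Γ.2 0 = 0 := by
    rw [hΓpad, padCLM_apply]
    simp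
  have hcolgen : ∀ A : Fin (p + 1) ⊕ Fin (p + 1), (coordDir A).2 0 = 0 →
      pderiv' (pderiv' (energyE n G (p + 1)) (Sum.inl 0)) A Γ = 0 :=
    fun A hA => claim2gen G p Γ (coordDir A) hΓ2 hA
  have hc1 : pderiv' (pderiv' (energyE n G (p + 1)) (Sum.inl 0)) (Sum.inl 0) Γ = 0 :=
    hcolgen (Sum.inl 0) (by rw [coordDir_inl]; rfl)
  refine ⟨hc1, ?_, ?_⟩
  · intro m hm
    exact ⟨hcolgen (Sum.inl m) (by rw [coordDir_inl]; rfl),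
      hcolgen (Sum.inr m) (by rw [coordDir_inr]; exact Pi.single_eq_of_ne (Ne.symm hm) 1)⟩
  · intro hbne
    have hsym := pderiv'_symm (energyE n G (p + 1)) hcd
    have hsmap2 : ∀ c : Fin p ⊕ Fin p, (coordDir (Sum.map Fin.succ Fin.succ c) :
        (Fin (p + 1) → ℝ) × (Fin (p + 1) → ℝ)).2 0 = 0 := by
      intro c
      cases c with
      | inl l => rw [Sum.map_inl, coordDir_inl]; rfl
      | inr l =>
        rw [Sum.map_inr, coordDir_inr]
        exact Pi.single_eq_of_ne (Fin.succ_ne_zero l).symm 1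
    refine det_aux _ _ b hbne ?_ ?_ ?_ ?_ ?_ ?_
    · exact hc1
    · rfl
    · show pderiv' (pderiv' (energyE n G (p + 1)) (Sum.inl 0)) (Sum.inr 0) Γ = b
      rw [hsym]
    · intro c
      show pderiv' (pderiv' (energyE n G (p + 1)) (Sum.map Fin.succ Fin.succ c)) (Sum.inl 0) Γ = 0
      rw [hsym]
      exact hcolgen _ (hsmap2 c)
    · intro a
      exact hcolgen _ (hsmap2 a)
    · intro a c
      show pderiv' (pderiv' (energyE n G (p + 1)) (Sum.map Fin.succ Fin.succ c))
          (Sum.map Fin.succ Fin.succ a) Γ = hessian (energyE n G p) (β, γ) a c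
      rw [hΓpad]
      exact pderiv2_pad G p a c (β, γ)
end

section
/- π-periodicity of the QAOA cost function in every individual angle: for every p ≥ 1, every (β,γ) ∈ ℝ^p × ℝ^p and every 1 ≤ l ≤ p, replacing β_l by β_l + π leaves E_p unchanged, and replacing γ_l by γ_l + π leaves E_p unchanged. -/
open Matrix Complex

open scoped Nat
lemma exp_pi_I_smul_of_sq {n : ℕ} (M : Matrix (QIdx n) (QIdx n) ℂ) (h : M * M = 1) :
    NormedSpace.exp (((Real.pi : ℂ) * Complex.I) • M) = -1 := by
  letI : SeminormedRing (Matrix (QIdx n) (QIdx n) ℂ) := Matrix.linftyOpSemiNormedRing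
  letI : NormedRing (Matrix (QIdx n) (QIdx n) ℂ) := Matrix.linftyOpNormedRing
  letI : NormedAlgebra ℂ (Matrix (QIdx n) (QIdx n) ℂ) := Matrix.linftyOpNormedAlgebra
  set c : ℂ := (Real.pi : ℂ) * Complex.I with hc
  have hM2 : M ^ 2 = 1 := by rw [sq]; exact h
  have hc2 : c ^ 2 = -((Real.pi : ℂ) ^ 2) := by
    rw [hc, mul_pow, Complex.I_sq]; ring
  set f : ℕ → Matrix (QIdx n) (QIdx n) ℂ := fun k => ((k ! : ℂ)⁻¹) • (c • M) ^ k with hf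
  have hfe : ∀ k, f (2 * k) =
      ((-1 : ℂ) ^ k * (Real.pi : ℂ) ^ (2 * k) / ((2 * k)! : ℂ)) • (1 : Matrix (QIdx n) (QIdx n) ℂ) := by
    intro k
    rw [hf]
    simp only
    rw [smul_pow, pow_mul c, pow_mul M, hM2, one_pow, hc2, smul_smul]
    congr 1
    rw [neg_pow, ← pow_mul]
    ring
  have hfo : ∀ k, f (2 * k + 1) =
      (Complex.I * ((-1 : ℂ) ^ k * (Real.pi : ℂ) ^ (2 * k + 1) / ((2 * k + 1)! : ℂ))) • M := by
    intro k
    rw [hf]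
    simp only
    rw [smul_pow, pow_succ M, pow_mul M, hM2, one_pow, one_mul, smul_smul, pow_succ c,
      pow_mul c, hc2, hc]
    congr 1
    rw [neg_pow, ← pow_mul]
    ring
  have he : HasSum (fun k => f (2 * k))
      ((Complex.cos (Real.pi : ℂ)) • (1 : Matrix (QIdx n) (QIdx n) ℂ)) := by
    simp only [hfe]
    exact (Complex.hasSum_cos _).smul_const _
  have ho : HasSum (fun k => f (2 * k + 1))
      ((Complex.I * Complex.sin (Real.pi : ℂ)) • M) := by
    simp only [hfo]
    exact ((Complex.hasSum_sin _).mul_left Complex.I).smul_const _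
  have htot : HasSum f ((Complex.cos (Real.pi : ℂ)) • (1 : Matrix (QIdx n) (QIdx n) ℂ)
      + (Complex.I * Complex.sin (Real.pi : ℂ)) • M) := he.even_add_odd ho
  rw [NormedSpace.exp_eq_tsum ℂ]
  show (∑' (k : ℕ), f k) = -1
  rw [htot.tsum_eq]
  rw [← Complex.ofReal_cos, ← Complex.ofReal_sin, Real.cos_pi, Real.sin_pi]
  push_cast
  simp
lemma exp_neg_I_pi_smul_of_sq {n : ℕ} (M : Matrix (QIdx n) (QIdx n) ℂ) (h : M * M = 1) :
    NormedSpace.exp ((-Complex.I * (Real.pi : ℂ)) • M) = -1 := by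
  have h1 : (-Complex.I * (Real.pi : ℂ)) • M = ((Real.pi : ℂ) * Complex.I) • (-M) := by
    rw [smul_neg, ← neg_smul]
    congr 1
    ring
  rw [h1, exp_pi_I_smul_of_sq (-M) (by rw [neg_mul_neg, h])]

lemma prod_delta_eq_one_apply {n : ℕ} (s t : QIdx n) :
    (∏ j, if s j = t j then (1 : ℂ) else 0) = (1 : Matrix (QIdx n) (QIdx n) ℂ) s t := by
  by_cases h : s = t
  · subst h
    simp [Matrix.one_apply]
  · rw [Matrix.one_apply_ne h]
    obtain ⟨j₀, hj₀⟩ := Function.ne_iff.mp h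
    exact Finset.prod_eq_zero (Finset.mem_univ j₀) (by rw [if_neg hj₀])

lemma pauliAt_one {n : ℕ} (i : Fin n) : pauliAt (1 : Matrix (Fin 2) (Fin 2) ℂ) i = 1 := by
  ext s t
  simp only [pauliAt, Matrix.of_apply, Matrix.one_apply, ite_self]
  exact prod_delta_eq_one_apply s t

lemma pauliAt_mul_same {n : ℕ} (M N : Matrix (Fin 2) (Fin 2) ℂ) (i : Fin n) :
    pauliAt M i * pauliAt N i = pauliAt (M * N) i := by
  ext s u
  simp only [pauliAt, Matrix.mul_apply, Matrix.of_apply, ← Finset.prod_mul_distrib]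
  rw [← Fintype.piFinset_univ, ← Finset.prod_univ_sum
    (t := fun _ : Fin n => (Finset.univ : Finset (Fin 2)))
    (f := fun k x => (if k = i then M (s k) x else if s k = x then 1 else 0) *
      (if k = i then N x (u k) else if x = u k then 1 else 0))]
  refine Finset.prod_congr rfl fun j _ => ?_
  by_cases hj : j = i
  · subst hj
    simp
  · simp [hj, Finset.sum_ite_eq, ite_mul, mul_ite]

lemma pauliAt_mul_ne {n : ℕ} (M N : Matrix (Fin 2) (Fin 2) ℂ) {i j : Fin n} (hij : i ≠ j) :
    pauliAt M i * pauliAt N j = Matrix.of fun s u => ∏ k,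
      if k = i then M (s k) (u k) else if k = j then N (s k) (u k)
        else if s k = u k then (1 : ℂ) else 0 := by
  ext s u
  simp only [pauliAt, Matrix.mul_apply, Matrix.of_apply, ← Finset.prod_mul_distrib]
  rw [← Fintype.piFinset_univ, ← Finset.prod_univ_sum
    (t := fun _ : Fin n => (Finset.univ : Finset (Fin 2)))
    (f := fun k x => (if k = i then M (s k) x else if s k = x then 1 else 0) *
      (if k = j then N x (u k) else if x = u k then 1 else 0))]
  refine Finset.prod_congr rfl fun k _ => ?_
  by_cases hk : k = i
  · subst hk
    simp [hij, Finset.sum_ite_eq, ite_mul, mul_ite]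
  · by_cases hk' : k = j
    · subst hk'
      simp [hk, Finset.sum_ite_eq, ite_mul, mul_ite]
    · simp [hk, hk', Finset.sum_ite_eq, ite_mul, mul_ite]

lemma pauliAt_commute {n : ℕ} (M N : Matrix (Fin 2) (Fin 2) ℂ) {i j : Fin n} (hij : i ≠ j) :
    Commute (pauliAt M i) (pauliAt N j) := by
  unfold Commute SemiconjBy
  rw [pauliAt_mul_ne M N hij, pauliAt_mul_ne N M hij.symm]
  ext s u
  simp only [Matrix.of_apply]
  refine Finset.prod_congr rfl fun k _ => ?_
  by_cases hk : k = i
  · subst hk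
    simp [hij, Ne.symm hij]
  · by_cases hk' : k = j
    · subst hk'
      simp [hk, Ne.symm hij, hij]
    · simp [hk, hk']

lemma pauliX_mul_self : pauliX * pauliX = 1 := by
  ext a b
  fin_cases a <;> fin_cases b <;>
    simp [pauliX, Matrix.mul_apply, Fin.sum_univ_two, Matrix.one_apply]

lemma sigmaX_mul_self {n : ℕ} (i : Fin n) : sigmaX i * sigmaX i = 1 := by
  rw [sigmaX, pauliAt_mul_same, pauliX_mul_self, pauliAt_one]
lemma pauliZ_diag_sq (a : Fin 2) : pauliZ a a * pauliZ a a = 1 := by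
  fin_cases a <;> norm_num [pauliZ]

lemma hamC_summand_diagonal {n : ℕ} (e : Sym2 (Fin n)) :
    ∃ d : QIdx n → ℂ, (∀ s, d s * d s = 1) ∧
      Sym2.lift ⟨fun i j => sigmaZ i * sigmaZ j, fun i j => sigmaZ_mul_comm i j⟩ e
        = Matrix.diagonal d := by
  induction e using Sym2.ind with
  | _ i j =>
    refine ⟨fun s => pauliZ (s i) (s i) * pauliZ (s j) (s j), fun s => ?_, ?_⟩
    · rw [mul_mul_mul_comm, pauliZ_diag_sq, pauliZ_diag_sq]; norm_num
    · rw [Sym2.lift_mk]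
      simp only
      rw [sigmaZ_eq_diagonal, sigmaZ_eq_diagonal, Matrix.diagonal_mul_diagonal]

lemma exp_neg_I_pi_hamC (n : ℕ) (G : SimpleGraph (Fin n)) [DecidableRel G.Adj] :
    NormedSpace.exp ((-Complex.I * (Real.pi : ℂ)) • hamC n G)
      = ((-1 : ℂ) ^ G.edgeFinset.card) • 1 := by
  have hcomm : (↑G.edgeFinset : Set (Sym2 (Fin n))).Pairwise
      (Function.onFun Commute fun e => (-Complex.I * (Real.pi : ℂ)) •
        Sym2.lift ⟨fun i j => sigmaZ i * sigmaZ j, fun i j => sigmaZ_mul_comm i j⟩ e) := by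
    intro e _ e' _ _
    obtain ⟨d, _, hdiag⟩ := hamC_summand_diagonal e
    obtain ⟨d', _, hdiag'⟩ := hamC_summand_diagonal e'
    simp only [Function.onFun]
    rw [hdiag, hdiag']
    refine Commute.smul_left (Commute.smul_right ?_ _) _
    unfold Commute SemiconjBy
    rw [Matrix.diagonal_mul_diagonal, Matrix.diagonal_mul_diagonal]
    exact congrArg Matrix.diagonal (funext fun s => mul_comm _ _)
  have hconst : ∀ e ∈ G.edgeFinset,
      NormedSpace.exp ((-Complex.I * (Real.pi : ℂ)) •
        Sym2.lift ⟨fun i j => sigmaZ i * sigmaZ j, fun i j => sigmaZ_mul_comm i j⟩ e)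
        = (-1 : Matrix (QIdx n) (QIdx n) ℂ) := by
    intro e _
    obtain ⟨d, hd, hdiag⟩ := hamC_summand_diagonal e
    rw [hdiag]
    refine exp_neg_I_pi_smul_of_sq _ ?_
    rw [Matrix.diagonal_mul_diagonal]
    rw [show (fun s => d s * d s) = fun _ => (1 : ℂ) from funext hd, Matrix.diagonal_one]
  rw [hamC, Finset.smul_sum, Matrix.exp_sum_of_commute G.edgeFinset
      (fun e => (-Complex.I * (Real.pi : ℂ)) •
        Sym2.lift ⟨fun i j => sigmaZ i * sigmaZ j, fun i j => sigmaZ_mul_comm i j⟩ e) hcomm]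
  refine (Finset.noncommProd_eq_pow_card _ _ _ _ hconst).trans ?_
  rw [    show (-1 : Matrix (QIdx n) (QIdx n) ℂ) = (-1 : ℂ) • 1 by simp, smul_pow, one_pow]

lemma exp_neg_I_pi_hamB (n : ℕ) :
    NormedSpace.exp ((-Complex.I * (Real.pi : ℂ)) • hamB n)
      = ((-1 : ℂ) ^ n) • 1 := by
  have h1 : (-Complex.I * (Real.pi : ℂ)) • hamB n
      = ∑ i : Fin n, ((Real.pi : ℂ) * Complex.I) • sigmaX i := by
    rw [hamB, smul_neg, ← neg_smul, ← Finset.smul_sum]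
    congr 1
    ring
  have hcomm : (↑(Finset.univ : Finset (Fin n)) : Set (Fin n)).Pairwise
      (Function.onFun Commute fun i => ((Real.pi : ℂ) * Complex.I) • sigmaX i) := by
    intro i _ j _ hij
    simp only [Function.onFun]
    exact Commute.smul_left (Commute.smul_right (pauliAt_commute _ _ hij) _) _
  have hconst : ∀ i ∈ (Finset.univ : Finset (Fin n)),
      NormedSpace.exp (((Real.pi : ℂ) * Complex.I) • sigmaX i)
        = (-1 : Matrix (QIdx n) (QIdx n) ℂ) :=
    fun i _ => exp_pi_I_smul_of_sq _ (sigmaX_mul_self i)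
  rw [h1, Matrix.exp_sum_of_commute Finset.univ
      (fun i => ((Real.pi : ℂ) * Complex.I) • sigmaX i) hcomm]
  refine (Finset.noncommProd_eq_pow_card _ _ _ _ hconst).trans ?_
  rw [    show (-1 : Matrix (QIdx n) (QIdx n) ℂ) = (-1 : ℂ) • 1 by simp, smul_pow, one_pow,
    Finset.card_univ, Fintype.card_fin]
lemma uB_add_pi (n : ℕ) (b : ℝ) : uB n (b + Real.pi) = ((-1 : ℂ) ^ n) • uB n b := by
  rw [uB, uB]
  have h : (-Complex.I * ((b + Real.pi : ℝ) : ℂ)) • hamB n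
      = (-Complex.I * (Real.pi : ℂ)) • hamB n + (-Complex.I * (b : ℂ)) • hamB n := by
    rw [← add_smul]
    congr 1
    push_cast
    ring
  rw [h, Matrix.exp_add_of_commute _ _ (((Commute.refl (hamB n)).smul_left _).smul_right _),
    exp_neg_I_pi_hamB, smul_mul_assoc, one_mul]

lemma uC_add_pi (n : ℕ) (G : SimpleGraph (Fin n)) [DecidableRel G.Adj] (c : ℝ) :
    uC n G (c + Real.pi) = ((-1 : ℂ) ^ G.edgeFinset.card) • uC n G c := by
  rw [uC, uC]
  have h : (-Complex.I * ((c + Real.pi : ℝ) : ℂ)) • hamC n G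
      = (-Complex.I * (Real.pi : ℂ)) • hamC n G + (-Complex.I * (c : ℂ)) • hamC n G := by
    rw [← add_smul]
    congr 1
    push_cast
    ring
  rw [h, Matrix.exp_add_of_commute _ _ (((Commute.refl (hamC n G)).smul_left _).smul_right _),
    exp_neg_I_pi_hamC, smul_mul_assoc, one_mul]

lemma qaoaLayer_beta_ne (n : ℕ) (G : SimpleGraph (Fin n)) [DecidableRel G.Adj] {p : ℕ}
    (β γ : Fin p → ℝ) (l : Fin p) (v : ℝ) (m : ℕ) (hm : m ≠ l.val) :
    qaoaLayer n G (Function.update β l v) γ m = qaoaLayer n G β γ m := by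
  unfold qaoaLayer
  split
  · rw [Function.update_of_ne (Fin.ne_of_val_ne hm)]
  · rfl

lemma qaoaLayer_gamma_ne (n : ℕ) (G : SimpleGraph (Fin n)) [DecidableRel G.Adj] {p : ℕ}
    (β γ : Fin p → ℝ) (l : Fin p) (v : ℝ) (m : ℕ) (hm : m ≠ l.val) :
    qaoaLayer n G β (Function.update γ l v) m = qaoaLayer n G β γ m := by
  unfold qaoaLayer
  split
  · rw [Function.update_of_ne (Fin.ne_of_val_ne hm)]
  · rfl

lemma qaoaLayer_beta_pi (n : ℕ) (G : SimpleGraph (Fin n)) [DecidableRel G.Adj] {p : ℕ}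
    (β γ : Fin p → ℝ) (l : Fin p) :
    qaoaLayer n G (Function.update β l (β l + Real.pi)) γ l.val
      = ((-1 : ℂ) ^ n) • qaoaLayer n G β γ l.val := by
  unfold qaoaLayer
  rw [dif_pos l.isLt, dif_pos l.isLt, Function.update_self, uB_add_pi, smul_mul_assoc]

lemma qaoaLayer_gamma_pi (n : ℕ) (G : SimpleGraph (Fin n)) [DecidableRel G.Adj] {p : ℕ}
    (β γ : Fin p → ℝ) (l : Fin p) :
    qaoaLayer n G β (Function.update γ l (γ l + Real.pi)) l.val
      = ((-1 : ℂ) ^ G.edgeFinset.card) • qaoaLayer n G β γ l.val := by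
  unfold qaoaLayer
  rw [dif_pos l.isLt, dif_pos l.isLt, Function.update_self, uC_add_pi, mul_smul_comm]

lemma uProd_add (n : ℕ) (G : SimpleGraph (Fin n)) [DecidableRel G.Adj] {p : ℕ}
    (β γ : Fin p → ℝ) (a b c : ℕ) :
    uProd n G β γ a (b + c) = uProd n G β γ (a + b) c * uProd n G β γ a b := by
  unfold uProd
  rw [← List.range'_append_1 (s := a) (m := b) (n := c), List.reverse_append, List.map_append, List.prod_append]

lemma uProd_one (n : ℕ) (G : SimpleGraph (Fin n)) [DecidableRel G.Adj] {p : ℕ}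
    (β γ : Fin p → ℝ) (a : ℕ) : uProd n G β γ a 1 = qaoaLayer n G β γ a := by
  unfold uProd
  simp

lemma uProd_congr (n : ℕ) (G : SimpleGraph (Fin n)) [DecidableRel G.Adj] {p : ℕ}
    (β γ β' γ' : Fin p → ℝ) (a len : ℕ)
    (H : ∀ m, a ≤ m → m < a + len → qaoaLayer n G β γ m = qaoaLayer n G β' γ' m) :
    uProd n G β γ a len = uProd n G β' γ' a len := by
  unfold uProd
  refine congrArg List.prod (List.map_congr_left fun m hm => ?_)
  rw [List.mem_reverse, List.mem_range'] at hm
  obtain ⟨i, hi, rfl⟩ := hm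
  exact H _ (by omega) (by omega)

lemma uProd_split (n : ℕ) (G : SimpleGraph (Fin n)) [DecidableRel G.Adj] {p : ℕ}
    (β γ : Fin p → ℝ) (len m : ℕ) (hm : m < len) :
    uProd n G β γ 0 len = uProd n G β γ (m + 1) (len - (m + 1)) *
      (qaoaLayer n G β γ m * uProd n G β γ 0 m) := by
  have h1 : len = m + (1 + (len - (m + 1))) := by omega
  conv_lhs => rw [h1]
  rw [uProd_add n G β γ 0 m (1 + (len - (m + 1))), zero_add,
    uProd_add n G β γ m 1 (len - (m + 1)), uProd_one, mul_assoc]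

lemma qaoaState_beta_pi (n : ℕ) (G : SimpleGraph (Fin n)) [DecidableRel G.Adj] {p : ℕ}
    (β γ : Fin p → ℝ) (l : Fin p) :
    qaoaState n G (Function.update β l (β l + Real.pi)) γ
      = ((-1 : ℂ) ^ n) • qaoaState n G β γ := by
  unfold qaoaState
  have h : uProd n G (Function.update β l (β l + Real.pi)) γ 0 p
      = ((-1 : ℂ) ^ n) • uProd n G β γ 0 p := by
    rw [uProd_split n G _ γ p l l.isLt, uProd_split n G β γ p l l.isLt,
      qaoaLayer_beta_pi n G β γ l,
      uProd_congr n G (Function.update β l (β l + Real.pi)) γ β γ (l + 1) (p - (l + 1))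
        (fun m h1 _ => qaoaLayer_beta_ne n G β γ l _ m (by omega)),
      uProd_congr n G (Function.update β l (β l + Real.pi)) γ β γ 0 l
        (fun m _ h2 => qaoaLayer_beta_ne n G β γ l _ m (by omega)),
      smul_mul_assoc, mul_smul_comm]
  rw [h, Matrix.smul_mulVec]

lemma qaoaState_gamma_pi (n : ℕ) (G : SimpleGraph (Fin n)) [DecidableRel G.Adj] {p : ℕ}
    (β γ : Fin p → ℝ) (l : Fin p) :
    qaoaState n G β (Function.update γ l (γ l + Real.pi))
      = ((-1 : ℂ) ^ G.edgeFinset.card) • qaoaState n G β γ := by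
  unfold qaoaState
  have h : uProd n G β (Function.update γ l (γ l + Real.pi)) 0 p
      = ((-1 : ℂ) ^ G.edgeFinset.card) • uProd n G β γ 0 p := by
    rw [uProd_split n G β _ p l l.isLt, uProd_split n G β γ p l l.isLt,
      qaoaLayer_gamma_pi n G β γ l,
      uProd_congr n G β (Function.update γ l (γ l + Real.pi)) β γ (l + 1) (p - (l + 1))
        (fun m h1 _ => qaoaLayer_gamma_ne n G β γ l _ m (by omega)),
      uProd_congr n G β (Function.update γ l (γ l + Real.pi)) β γ 0 l
        (fun m _ h2 => qaoaLayer_gamma_ne n G β γ l _ m (by omega)),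
      smul_mul_assoc, mul_smul_comm]
  rw [h, Matrix.smul_mulVec]

lemma energyE_eq_of_smul_state (n : ℕ) (G : SimpleGraph (Fin n)) [DecidableRel G.Adj] {p : ℕ}
    (β' γ' β γ : Fin p → ℝ) (k : ℕ)
    (h : qaoaState n G β' γ' = ((-1 : ℂ) ^ k) • qaoaState n G β γ) :
    energyE n G p (β', γ') = energyE n G p (β, γ) := by
  unfold energyE
  simp only
  rw [h]
  set ψ := qaoaState n G β γ with hψ
  rw [Matrix.mulVec_smul, star_smul, smul_dotProduct, dotProduct_smul,
    smul_eq_mul, smul_eq_mul, ← mul_assoc]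
  have hs : star ((-1 : ℂ) ^ k) * (-1 : ℂ) ^ k = 1 := by
    rw [star_pow, star_neg, star_one, ← pow_add]
    exact Even.neg_one_pow ⟨k, rfl⟩
  rw [hs, one_mul]

/-- π-periodicity of the QAOA cost function in every individual angle. -/
theorem stmt14 (n : ℕ) (hn : 1 ≤ n) (G : SimpleGraph (Fin n)) [DecidableRel G.Adj]
    (p : ℕ) (hp : 1 ≤ p) (β γ : Fin p → ℝ) (l : Fin p) :
    energyE n G p (Function.update β l (β l + Real.pi), γ) = energyE n G p (β, γ) ∧
    energyE n G p (β, Function.update γ l (γ l + Real.pi)) = energyE n G p (β, γ) := by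
  constructor
  · exact energyE_eq_of_smul_state n G _ γ β γ n (qaoaState_beta_pi n G β γ l)
  · exact energyE_eq_of_smul_state n G β _ β γ G.edgeFinset.card (qaoaState_gamma_pi n G β γ l)
end

section
/- π/2-shift symmetry of the QAOA cost function in the mixing angles: for every p ≥ 1, every (β,γ) ∈ ℝ^p × ℝ^p and every 1 ≤ l ≤ p, replacing β_l by β_l + π/2 leaves E_p unchanged. (This follows from exp(-i(π/2)H_B) being proportional to the global spin flip X^{⊗n} = σ^x_1 σ^x_2 ⋯ σ^x_n, which commutes with both H_C and H_B.) -/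
open Matrix Complex

noncomputable section QAux

open Matrix Complex

namespace QAux

variable {n : ℕ}

/-- Tensor product of 2×2 matrices over all qubit factors. -/
def T (n : ℕ) (f : Fin n → Matrix (Fin 2) (Fin 2) ℂ) : Matrix (QIdx n) (QIdx n) ℂ :=
  Matrix.of fun s t => ∏ j, f j (s j) (t j)

lemma T_mul (f g : Fin n → Matrix (Fin 2) (Fin 2) ℂ) :
    T n f * T n g = T n (fun j => f j * g j) := by
  ext s t
  simp only [T, Matrix.mul_apply, Matrix.of_apply]
  rw [Finset.prod_univ_sum, Fintype.piFinset_univ]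
  exact Finset.sum_congr rfl fun u _ => Finset.prod_mul_distrib.symm

lemma T_one : T n (fun _ => 1) = 1 := by
  ext s t
  simp only [T, Matrix.of_apply, Matrix.one_apply]
  by_cases h : s = t
  · subst h; simp
  · rw [if_neg h]
    obtain ⟨j₀, hj₀⟩ := Function.ne_iff.mp h
    exact Finset.prod_eq_zero (Finset.mem_univ j₀) (if_neg hj₀)

lemma pauliAt_eq_T (M : Matrix (Fin 2) (Fin 2) ℂ) (i : Fin n) :
    pauliAt M i = T n (fun j => if j = i then M else 1) := by
  ext s t
  simp only [pauliAt, T, Matrix.of_apply]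
  refine Finset.prod_congr rfl fun j _ => ?_
  by_cases h : j = i
  · simp [h]
  · simp [h, Matrix.one_apply]

lemma pauliAt_mul (M N : Matrix (Fin 2) (Fin 2) ℂ) (i : Fin n) :
    pauliAt M i * pauliAt N i = pauliAt (M * N) i := by
  rw [pauliAt_eq_T M, pauliAt_eq_T N, T_mul,
    show (fun j => (if j = i then M else 1) * (if j = i then N else 1))
        = (fun j => if j = i then M * N else (1 : Matrix (Fin 2) (Fin 2) ℂ)) from
      funext fun k => by by_cases h : k = i <;> simp [h], ← pauliAt_eq_T]

lemma pauliAt_one (i : Fin n) : pauliAt (1 : Matrix (Fin 2) (Fin 2) ℂ) i = 1 := by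
  rw [pauliAt_eq_T]
  simp only [ite_self]
  exact T_one

lemma pauliAt_smul (z : ℂ) (M : Matrix (Fin 2) (Fin 2) ℂ) (i : Fin n) :
    pauliAt (z • M) i = z • pauliAt M i := by
  ext s t
  simp only [pauliAt, Matrix.of_apply, Matrix.smul_apply, smul_eq_mul]
  rw [← Finset.mul_prod_erase _ _ (Finset.mem_univ i),
    ← Finset.mul_prod_erase _
      (fun j => if j = i then M (s j) (t j) else if s j = t j then 1 else 0)
      (Finset.mem_univ i)]
  have he : ∏ j ∈ Finset.univ.erase i,
      (if j = i then z * M (s j) (t j) else if s j = t j then (1:ℂ) else 0)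
      = ∏ j ∈ Finset.univ.erase i,
      (if j = i then M (s j) (t j) else if s j = t j then (1:ℂ) else 0) :=
    Finset.prod_congr rfl fun j hj => by
      rw [if_neg (Finset.ne_of_mem_erase hj), if_neg (Finset.ne_of_mem_erase hj)]
  rw [he, if_pos rfl, if_pos rfl]
  ring

lemma pauliAt_diagonal (d : Fin 2 → ℂ) (i : Fin n) :
    pauliAt (Matrix.diagonal d) i = Matrix.diagonal (fun s : QIdx n => d (s i)) := by
  ext s t
  simp only [pauliAt, Matrix.of_apply, Matrix.diagonal_apply]
  by_cases h : s = t
  · subst h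
    simp [Finset.prod_ite_eq']
  · rw [if_neg h]
    obtain ⟨j₀, hj₀⟩ := Function.ne_iff.mp h
    refine Finset.prod_eq_zero (Finset.mem_univ j₀) ?_
    by_cases hji : j₀ = i
    · subst hji
      rw [if_pos rfl, if_neg hj₀]
    · rw [if_neg hji, if_neg hj₀]

def P2 : Matrix (Fin 2) (Fin 2) ℂ := !![1, 1; 1, -1]

def Q2 : Matrix (Fin 2) (Fin 2) ℂ := !![1/2, 1/2; 1/2, -1/2]

lemma P2_mul_Q2 : P2 * Q2 = 1 := by
  ext i j
  fin_cases i <;> fin_cases j <;>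
    simp [P2, Q2, Matrix.mul_apply, Fin.sum_univ_two, Matrix.one_apply] <;> norm_num

lemma conj_diag (a : ℂ) : P2 * Matrix.diagonal ![a, -a] * Q2 = a • pauliX := by
  have hd : Matrix.diagonal ![a, -a] = !![a, 0; 0, -a] := by
    ext i j
    fin_cases i <;> fin_cases j <;> simp [Matrix.diagonal_apply]
  rw [hd]
  ext i j
  fin_cases i <;> fin_cases j <;>
    (simp [P2, Q2, pauliX, Matrix.mul_apply, Fin.sum_univ_two]; try ring)

lemma exp_smul_sigmaX (i : Fin n) :
    NormedSpace.exp ((Complex.I * ((Real.pi / 2 : ℝ) : ℂ)) • sigmaX i)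
      = Complex.I • sigmaX i := by
  have hPQ : pauliAt P2 i * pauliAt Q2 i = (1 : Matrix (QIdx n) (QIdx n) ℂ) := by
    rw [pauliAt_mul, P2_mul_Q2, pauliAt_one]
  have hinv : (pauliAt P2 i)⁻¹ = pauliAt Q2 i := Matrix.inv_eq_right_inv hPQ
  have hQP : pauliAt Q2 i * pauliAt P2 i = (1 : Matrix (QIdx n) (QIdx n) ℂ) := by
    rw [pauliAt_mul]
    rw [show Q2 * P2 = 1 from by
      ext a b
      fin_cases a <;> fin_cases b <;>
        simp [P2, Q2, Matrix.mul_apply, Fin.sum_univ_two, Matrix.one_apply] <;> norm_num]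
    exact pauliAt_one i
  have hU : IsUnit (pauliAt P2 i) := ⟨⟨pauliAt P2 i, pauliAt Q2 i, hPQ, hQP⟩, rfl⟩
  set a : ℂ := Complex.I * ((Real.pi / 2 : ℝ) : ℂ) with ha
  have h1 : (a • sigmaX i : Matrix (QIdx n) (QIdx n) ℂ)
      = pauliAt P2 i * pauliAt (Matrix.diagonal ![a, -a]) i * (pauliAt P2 i)⁻¹ := by
    rw [hinv, pauliAt_mul, pauliAt_mul, conj_diag, pauliAt_smul, sigmaX]
  rw [h1, Matrix.exp_conj _ _ hU, pauliAt_diagonal, Matrix.exp_diagonal]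
  have h2 : NormedSpace.exp (fun s : QIdx n => (![a, -a] : Fin 2 → ℂ) (s i))
      = fun s : QIdx n => (![Complex.I, -Complex.I] : Fin 2 → ℂ) (s i) := by
    funext s
    rw [Pi.coe_exp]
    have hx : ∀ b : Fin 2, NormedSpace.exp ((![a, -a] : Fin 2 → ℂ) b)
        = (![Complex.I, -Complex.I] : Fin 2 → ℂ) b := by
      intro b
      rw [← Complex.exp_eq_exp_ℂ]
      fin_cases b
      · show Complex.exp a = Complex.I
        rw [ha, mul_comm, Complex.exp_mul_I, ← Complex.ofReal_cos, ← Complex.ofReal_sin]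
        simp [Real.cos_pi_div_two, Real.sin_pi_div_two]
      · show Complex.exp (-a) = -Complex.I
        rw [ha, mul_comm, ← neg_mul,
          show (-(((Real.pi/2 : ℝ)):ℂ)) = (((-(Real.pi/2) : ℝ)):ℂ) from by push_cast; ring,
          Complex.exp_mul_I, ← Complex.ofReal_cos, ← Complex.ofReal_sin]
        simp [Real.cos_pi_div_two, Real.sin_pi_div_two]
    exact hx (s i)
  rw [h2, ← pauliAt_diagonal, hinv, pauliAt_mul, pauliAt_mul, conj_diag, pauliAt_smul, sigmaX]

def Fm (n : ℕ) : Matrix (QIdx n) (QIdx n) ℂ := T n (fun _ => pauliX)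

lemma sigmaX_comm (i j : Fin n) : Commute (sigmaX i) (sigmaX j) := by
  show sigmaX i * sigmaX j = sigmaX j * sigmaX i
  rw [sigmaX, sigmaX, pauliAt_eq_T, pauliAt_eq_T, T_mul, T_mul,
    show (fun k => (if k = i then pauliX else 1) * (if k = j then pauliX else 1))
        = (fun k => (if k = j then pauliX else 1) * (if k = i then pauliX else 1)) from
      funext fun k => by by_cases h1 : k = i <;> by_cases h2 : k = j <;> simp [h1, h2]]

lemma Fm_comm_sigmaX (i : Fin n) : Commute (Fm n) (sigmaX i) := by
  show Fm n * sigmaX i = sigmaX i * Fm n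
  rw [Fm, sigmaX, pauliAt_eq_T, T_mul, T_mul,
    show (fun k => pauliX * (if k = i then pauliX else 1))
        = (fun k => (if k = i then pauliX else 1) * pauliX) from
      funext fun k => by by_cases h : k = i <;> simp [h]]

lemma X_mul_Z : pauliX * pauliZ = -(pauliZ * pauliX) := by
  ext i j
  fin_cases i <;> fin_cases j <;>
    simp [pauliX, pauliZ, Matrix.mul_apply, Fin.sum_univ_two]

lemma T_neg (f : Fin n → Matrix (Fin 2) (Fin 2) ℂ) (i : Fin n) :
    T n (fun j => if j = i then -(f j) else f j) = -(T n f) := by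
  ext s t
  simp only [T, Matrix.of_apply, Matrix.neg_apply]
  rw [← Finset.mul_prod_erase _ _ (Finset.mem_univ i),
    ← Finset.mul_prod_erase _ (fun j => f j (s j) (t j)) (Finset.mem_univ i)]
  have he : ∏ j ∈ Finset.univ.erase i,
      ((if j = i then -(f j) else f j) (s j) (t j))
      = ∏ j ∈ Finset.univ.erase i, f j (s j) (t j) :=
    Finset.prod_congr rfl fun j hj => by rw [if_neg (Finset.ne_of_mem_erase hj)]
  rw [he, if_pos rfl, Matrix.neg_apply]
  ring

lemma Fm_anticomm_sigmaZ (i : Fin n) : Fm n * sigmaZ i = -(sigmaZ i * Fm n) := by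
  rw [Fm, sigmaZ, pauliAt_eq_T, T_mul, T_mul]
  rw [show (fun k => pauliX * if k = i then pauliZ else 1)
      = (fun k => if k = i then -((if k = i then pauliZ else 1) * pauliX)
          else ((if k = i then pauliZ else 1) * pauliX)) from
    funext fun k => by by_cases hk : k = i <;> simp [hk, X_mul_Z]]
  exact T_neg _ i

lemma Fm_comm_sigmaZZ (i j : Fin n) : Commute (Fm n) (sigmaZ i * sigmaZ j) := by
  show Fm n * (sigmaZ i * sigmaZ j) = (sigmaZ i * sigmaZ j) * Fm n
  calc Fm n * (sigmaZ i * sigmaZ j) = (Fm n * sigmaZ i) * sigmaZ j := (mul_assoc _ _ _).symm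
    _ = -((sigmaZ i * Fm n) * sigmaZ j) := by rw [Fm_anticomm_sigmaZ, neg_mul]
    _ = -(sigmaZ i * (Fm n * sigmaZ j)) := by rw [mul_assoc]
    _ = sigmaZ i * (sigmaZ j * Fm n) := by rw [Fm_anticomm_sigmaZ, mul_neg, neg_neg]
    _ = (sigmaZ i * sigmaZ j) * Fm n := (mul_assoc _ _ _).symm

lemma Fm_comm_hamC (G : SimpleGraph (Fin n)) [DecidableRel G.Adj] :
    Commute (Fm n) (hamC n G) := by
  unfold hamC
  refine Commute.sum_right _ _ _ fun e he => ?_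
  induction e using Sym2.ind with
  | _ i j => rw [Sym2.lift_mk]; exact Fm_comm_sigmaZZ i j

lemma Fm_comm_hamB : Commute (Fm n) (hamB n) := by
  unfold hamB
  exact (Commute.sum_right _ _ _ fun i _ => Fm_comm_sigmaX i).neg_right

lemma Fm_comm_uB (b : ℝ) : Commute (Fm n) (uB n b) := by
  unfold uB
  exact (Fm_comm_hamB.smul_right _).exp_right

lemma Fm_comm_uC (G : SimpleGraph (Fin n)) [DecidableRel G.Adj] (g : ℝ) :
    Commute (Fm n) (uC n G g) := by
  unfold uC
  exact ((Fm_comm_hamC G).smul_right _).exp_right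

lemma Fm_mulVec_plus : (Fm n).mulVec (plusState n) = plusState n := by
  funext s
  have hF : ∀ t : QIdx n, Fm n s t = if t = (fun j => s j + 1) then 1 else 0 := by
    intro t
    by_cases h : t = fun j => s j + 1
    · subst h
      rw [if_pos rfl]
      show ∏ j, pauliX (s j) (s j + 1) = 1
      refine Finset.prod_eq_one fun j _ => ?_
      have hx : ∀ b : Fin 2, pauliX b (b + 1) = 1 := by
        intro b; fin_cases b <;> simp [pauliX]
      exact hx _
    · rw [if_neg h]
      obtain ⟨j₀, hj₀⟩ := Function.ne_iff.mp h
      refine Finset.prod_eq_zero (Finset.mem_univ j₀) ?_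
      have hx : ∀ a b : Fin 2, b ≠ a + 1 → pauliX a b = 0 := by
        intro a b hb; fin_cases a <;> fin_cases b <;> simp_all [pauliX]
      exact hx _ _ hj₀
  show ∑ t, Fm n s t * plusState n t = plusState n s
  simp only [hF, plusState, ite_mul, one_mul, zero_mul]
  rw [Finset.sum_ite_eq' Finset.univ (fun j => s j + 1)
    (fun _ => ((Real.sqrt 2 : ℂ))⁻¹ ^ n)]
  simp

lemma uB_add_pi_half (b : ℝ) : uB n (b + Real.pi / 2) = uB n b * uB n (Real.pi / 2) := by
  unfold uB
  rw [← Matrix.exp_add_of_commute]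
  · congr 1
    push_cast
    rw [mul_add, add_smul]
  · exact ((Commute.refl (hamB n)).smul_right _).smul_left _

lemma prodX (s : Finset (Fin n)) :
    s.noncommProd (fun i => (Complex.I : ℂ) • sigmaX i)
      (show (s : Set (Fin n)).Pairwise (Function.onFun Commute fun i => (Complex.I : ℂ) • sigmaX i) from
        fun i _ j _ _ => ((sigmaX_comm i j).smul_left _).smul_right _)
      = (Complex.I) ^ s.card • T n (fun j => if j ∈ s then pauliX else 1) := by
  induction s using Finset.cons_induction with
  | empty => simp [Finset.noncommProd_empty, T_one]
  | cons a s ha ih =>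
    rw [Finset.noncommProd_cons, ih, smul_mul_assoc, mul_smul_comm, smul_smul,
      Finset.card_cons, pow_succ]
    have hT : sigmaX a * T n (fun j => if j ∈ s then pauliX else 1)
        = T n (fun j => if j ∈ Finset.cons a s ha then pauliX else 1) := by
      rw [sigmaX, pauliAt_eq_T, T_mul,
        show (fun k => (if k = a then pauliX else 1) * (if k ∈ s then pauliX else 1))
            = (fun k => if k ∈ Finset.cons a s ha then pauliX else 1) from
          funext fun k => by
            by_cases h1 : k = a
            · subst h1; simp [ha, Finset.mem_cons]
            · simp [h1, Finset.mem_cons]]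
    rw [hT, mul_comm]

lemma uB_pi_half : uB n (Real.pi / 2) = (Complex.I) ^ n • Fm n := by
  unfold uB hamB
  have h1 : ((-Complex.I * ((Real.pi / 2 : ℝ) : ℂ)) • (-(∑ i : Fin n, sigmaX i)))
      = ∑ i : Fin n, (Complex.I * ((Real.pi / 2 : ℝ) : ℂ)) • sigmaX i := by
    rw [smul_neg, ← neg_smul, neg_mul, neg_neg, Finset.smul_sum]
  have h2 := Matrix.exp_sum_of_commute Finset.univ
    (fun i : Fin n => (Complex.I * ((Real.pi / 2 : ℝ) : ℂ)) • sigmaX i)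
    (fun i _ j _ _ => ((sigmaX_comm i j).smul_left _).smul_right _)
  rw [h1, h2]
  refine (Finset.noncommProd_congr rfl (fun i _ => exp_smul_sigmaX i) _).trans ?_
  rw [prodX]
  simp [Fm, Finset.card_univ]

lemma layer_comm (G : SimpleGraph (Fin n)) [DecidableRel G.Adj] {p : ℕ}
    (β γ : Fin p → ℝ) (m : ℕ) : Commute (Fm n) (qaoaLayer n G β γ m) := by
  unfold qaoaLayer
  split
  · exact (Fm_comm_uB _).mul_right (Fm_comm_uC _ _)
  · exact Commute.one_right _

lemma uProd_comm (G : SimpleGraph (Fin n)) [DecidableRel G.Adj] {p : ℕ}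
    (β γ : Fin p → ℝ) (a len : ℕ) : Commute (Fm n) (uProd n G β γ a len) := by
  refine Commute.list_prod_right _ _ fun x hx => ?_
  simp only [List.mem_map, List.mem_reverse] at hx
  obtain ⟨m, _, rfl⟩ := hx
  exact layer_comm G β γ m

lemma uProd_zero (G : SimpleGraph (Fin n)) [DecidableRel G.Adj] {p : ℕ}
    (β γ : Fin p → ℝ) (a : ℕ) : uProd n G β γ a 0 = 1 := by simp [uProd]

lemma uProd_succ (G : SimpleGraph (Fin n)) [DecidableRel G.Adj] {p : ℕ}
    (β γ : Fin p → ℝ) (a len : ℕ) :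
    uProd n G β γ a (len + 1) = qaoaLayer n G β γ (a + len) * uProd n G β γ a len := by
  unfold uProd
  rw [List.range'_concat, List.reverse_append, List.map_append, List.prod_append]
  simp

lemma uProd_add (G : SimpleGraph (Fin n)) [DecidableRel G.Adj] {p : ℕ}
    (β γ : Fin p → ℝ) (j k : ℕ) :
    uProd n G β γ 0 (j + k) = uProd n G β γ j k * uProd n G β γ 0 j := by
  induction k with
  | zero => rw [Nat.add_zero, uProd_zero, one_mul]
  | succ k ih => rw [← Nat.add_assoc, uProd_succ, ih, uProd_succ, Nat.zero_add, mul_assoc]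

lemma uProd_congr_layers (G : SimpleGraph (Fin n)) [DecidableRel G.Adj] {p : ℕ}
    (β β' γ : Fin p → ℝ) (a len : ℕ)
    (h : ∀ k ∈ List.range' a len, qaoaLayer n G β γ k = qaoaLayer n G β' γ k) :
    uProd n G β γ a len = uProd n G β' γ a len := by
  unfold uProd
  congr 1
  exact List.map_congr_left fun k hk => h k (List.mem_reverse.mp hk)

lemma layer_update_ne (G : SimpleGraph (Fin n)) [DecidableRel G.Adj] {p : ℕ}
    (β γ : Fin p → ℝ) (l : Fin p) (x : ℝ) (k : ℕ) (hk : k ≠ l.val) :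
    qaoaLayer n G (Function.update β l x) γ k = qaoaLayer n G β γ k := by
  unfold qaoaLayer
  split
  · rw [Function.update_of_ne (Fin.ne_of_val_ne hk)]
  · rfl

lemma qaoaState_update (G : SimpleGraph (Fin n)) [DecidableRel G.Adj] {p : ℕ}
    (β γ : Fin p → ℝ) (l : Fin p) :
    qaoaState n G (Function.update β l (β l + Real.pi / 2)) γ
      = (Complex.I) ^ n • qaoaState n G β γ := by
  set β' := Function.update β l (β l + Real.pi / 2) with hβ'
  have hm : l.val < p := l.isLt
  have hsplit : ∀ δ : Fin p → ℝ, uProd n G δ γ 0 p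
      = uProd n G δ γ (l.val + 1) (p - (l.val + 1))
        * (qaoaLayer n G δ γ l.val * uProd n G δ γ 0 l.val) := by
    intro δ
    have hp' : p = (l.val + 1) + (p - (l.val + 1)) := by omega
    calc uProd n G δ γ 0 p
        = uProd n G δ γ 0 ((l.val + 1) + (p - (l.val + 1))) := by rw [← hp']
      _ = uProd n G δ γ (l.val + 1) (p - (l.val + 1)) * uProd n G δ γ 0 (l.val + 1) :=
          uProd_add G δ γ (l.val + 1) (p - (l.val + 1))
      _ = uProd n G δ γ (l.val + 1) (p - (l.val + 1))
            * (qaoaLayer n G δ γ l.val * uProd n G δ γ 0 l.val) := by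
          rw [uProd_succ, Nat.zero_add]
  have hhigh : uProd n G β' γ (l.val + 1) (p - (l.val + 1))
      = uProd n G β γ (l.val + 1) (p - (l.val + 1)) := by
    refine uProd_congr_layers G β' β γ _ _ fun k hk => ?_
    have := List.mem_range'_1.mp hk
    exact layer_update_ne G β γ l _ k (by omega)
  have hlow : uProd n G β' γ 0 l.val = uProd n G β γ 0 l.val := by
    refine uProd_congr_layers G β' β γ _ _ fun k hk => ?_
    have := List.mem_range'_1.mp hk
    exact layer_update_ne G β γ l _ k (by omega)
  have hlayer : qaoaLayer n G β' γ l.val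
      = (Complex.I) ^ n • (qaoaLayer n G β γ l.val * Fm n) := by
    unfold qaoaLayer
    rw [dif_pos hm, dif_pos hm]
    have hfin : (⟨l.val, hm⟩ : Fin p) = l := rfl
    rw [hfin, hβ', Function.update_self, uB_add_pi_half, uB_pi_half]
    rw [mul_smul_comm, smul_mul_assoc]
    congr 1
    rw [mul_assoc, (Fm_comm_uC G (γ l)).eq, ← mul_assoc]
  unfold qaoaState
  rw [hsplit β', hsplit β, hhigh, hlow, hlayer]
  have hmain : uProd n G β γ (l.val + 1) (p - (l.val + 1))
        * ((Complex.I) ^ n • (qaoaLayer n G β γ l.val * Fm n) * uProd n G β γ 0 l.val)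
      = (Complex.I) ^ n • ((uProd n G β γ (l.val + 1) (p - (l.val + 1))
        * (qaoaLayer n G β γ l.val * uProd n G β γ 0 l.val)) * Fm n) := by
    rw [smul_mul_assoc, mul_smul_comm]
    congr 1
    rw [mul_assoc (qaoaLayer n G β γ l.val) (Fm n) (uProd n G β γ 0 l.val),
      (uProd_comm G β γ 0 l.val).eq]
    simp only [mul_assoc]
  rw [hmain, smul_mulVec, ← Matrix.mulVec_mulVec, Fm_mulVec_plus]

end QAux

end QAux

/-- π/2-shift symmetry of the QAOA cost function in the mixing angles. -/
theorem stmt15 (n : ℕ) (hn : 1 ≤ n) (G : SimpleGraph (Fin n)) [DecidableRel G.Adj]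
    (p : ℕ) (hp : 1 ≤ p) (β γ : Fin p → ℝ) (l : Fin p) :
    energyE n G p (Function.update β l (β l + Real.pi / 2), γ) = energyE n G p (β, γ) := by
  unfold energyE
  dsimp only
  rw [QAux.qaoaState_update G β γ l]
  rw [star_smul, Matrix.mulVec_smul, smul_dotProduct, dotProduct_smul, smul_smul]
  have hc : star ((Complex.I) ^ n) * (Complex.I) ^ n = 1 := by
    rw [star_pow, Complex.star_def, Complex.conj_I, ← mul_pow, neg_mul, Complex.I_mul_I,
      neg_neg, one_pow]
  rw [hc, one_smul]
end

section
/- If every vertex of the graph G has odd degree, then exp(-i(π/2)H_C) = (-i)^{|E|} · σ^z_1 σ^z_2 ⋯ σ^z_n, where |E| is the number of edges of G; that is, the half-period evolution under the MaxCut Hamiltonian equals, up to the global phase (-i)^{|E|}, the product of Pauli-Z operators over all qubits. -/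
open Matrix Complex

section AuxStmt17

open Matrix Complex

lemma edgeTermDiag {n : ℕ} (e : Sym2 (Fin n)) :
    Sym2.lift ⟨fun i j => sigmaZ i * sigmaZ j, fun i j => sigmaZ_mul_comm i j⟩ e =
    Matrix.diagonal (fun s : QIdx n =>
      Sym2.lift ⟨fun i j => pauliZ (s i) (s i) * pauliZ (s j) (s j),
        fun i j => mul_comm _ _⟩ e) := by
  induction e using Sym2.ind with
  | _ i j =>
    simp only [Sym2.lift_mk, sigmaZ_eq_diagonal, Matrix.diagonal_mul_diagonal]

lemma hamC_eq_diagonal (n : ℕ) (G : SimpleGraph (Fin n)) [DecidableRel G.Adj] :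
    hamC n G = Matrix.diagonal (fun s : QIdx n =>
      ∑ e ∈ G.edgeFinset,
        Sym2.lift ⟨fun i j => pauliZ (s i) (s i) * pauliZ (s j) (s j),
          fun i j => mul_comm _ _⟩ e) := by
  unfold hamC
  simp_rw [edgeTermDiag]
  ext s t
  by_cases h : s = t
  · subst h; simp [Matrix.sum_apply]
  · simp [Matrix.sum_apply, Matrix.diagonal_apply_ne _ h]

lemma pauliZ_diag_cases (a : Fin 2) : pauliZ a a = 1 ∨ pauliZ a a = -1 := by
  fin_cases a <;> simp [pauliZ]

lemma exp_key (z : ℂ) (hz : z = 1 ∨ z = -1) :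
    Complex.exp (-Complex.I * ((Real.pi / 2 : ℝ) : ℂ) * z) = -Complex.I * z := by
  have key : ∀ x : ℝ, Complex.exp ((x : ℂ) * Complex.I) =
      ((Real.cos x : ℝ) : ℂ) + ((Real.sin x : ℝ) : ℂ) * Complex.I := by
    intro x
    rw [Complex.exp_mul_I, Complex.ofReal_cos, Complex.ofReal_sin]
  rcases hz with h | h <;> subst h
  · have : (-Complex.I * ((Real.pi / 2 : ℝ) : ℂ) * 1)
        = ((-(Real.pi / 2) : ℝ) : ℂ) * Complex.I := by push_cast; ring
    rw [this, key]
    simp [Real.cos_pi_div_two, Real.sin_pi_div_two]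
  · have : (-Complex.I * ((Real.pi / 2 : ℝ) : ℂ) * (-1))
        = (((Real.pi / 2) : ℝ) : ℂ) * Complex.I := by push_cast; ring
    rw [this, key]
    simp [Real.cos_pi_div_two, Real.sin_pi_div_two]

lemma lift_pm {n : ℕ} (s : QIdx n) (e : Sym2 (Fin n)) :
    Sym2.lift ⟨fun i j => pauliZ (s i) (s i) * pauliZ (s j) (s j),
      fun i j => mul_comm _ _⟩ e = 1 ∨
    Sym2.lift ⟨fun i j => pauliZ (s i) (s i) * pauliZ (s j) (s j),
      fun i j => mul_comm _ _⟩ e = -1 := by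
  induction e using Sym2.ind with
  | _ i j =>
    rw [Sym2.lift_mk]
    rcases pauliZ_diag_cases (s i) with h1 | h1 <;>
      rcases pauliZ_diag_cases (s j) with h2 | h2 <;> simp [h1, h2]

lemma prod_edges {n : ℕ} (G : SimpleGraph (Fin n)) [DecidableRel G.Adj] (f : Fin n → ℂ) :
    (∏ e ∈ G.edgeFinset, Sym2.lift ⟨fun i j => f i * f j, fun i j => mul_comm _ _⟩ e)
      = ∏ v, f v ^ G.degree v := by
  classical
  have h1 : ∀ e ∈ G.edgeFinset,
      Sym2.lift ⟨fun i j => f i * f j, fun i j => mul_comm _ _⟩ e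
        = ∏ v, if v ∈ e then f v else 1 := by
    intro e he
    induction e using Sym2.ind with
    | _ i j =>
      rw [Sym2.lift_mk, ← Finset.prod_filter]
      have hij : i ≠ j := by
        rw [SimpleGraph.mem_edgeFinset, SimpleGraph.mem_edgeSet] at he
        exact G.ne_of_adj he
      have hfil : Finset.univ.filter (fun v => v ∈ s(i, j)) = {i, j} := by
        ext v; simp [Sym2.mem_iff]
      rw [hfil, Finset.prod_pair hij]
  calc (∏ e ∈ G.edgeFinset, Sym2.lift ⟨fun i j => f i * f j, fun i j => mul_comm _ _⟩ e)
      = ∏ e ∈ G.edgeFinset, ∏ v, (if v ∈ e then f v else 1) := Finset.prod_congr rfl h1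
    _ = ∏ v, ∏ e ∈ G.edgeFinset, (if v ∈ e then f v else 1) := Finset.prod_comm
    _ = ∏ v, f v ^ G.degree v := by
        refine Finset.prod_congr rfl fun v _ => ?_
        rw [← Finset.prod_filter, ← SimpleGraph.incidenceFinset_eq_filter,
          Finset.prod_const, SimpleGraph.card_incidenceFinset_eq_degree]

lemma prod_map_diagonal {m ι : Type*} [Fintype m] [DecidableEq m]
    (d : ι → m → ℂ) (l : List ι) :
    (l.map (fun i => Matrix.diagonal (d i))).prod
      = Matrix.diagonal (fun s => (l.map (fun i => d i s)).prod) := by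
  induction l with
  | nil => simp
  | cons a l ih =>
    rw [List.map_cons, List.prod_cons, ih, Matrix.diagonal_mul_diagonal]
    simp only [List.map_cons, List.prod_cons]

end AuxStmt17

/-- for odd-degree graphs, `exp(-i(π/2)H_C) = (-i)^|E| · σ^z_1 ⋯ σ^z_n`. -/
theorem stmt17 (n : ℕ) (hn : 1 ≤ n) (G : SimpleGraph (Fin n)) [DecidableRel G.Adj]
    (hodd : ∀ v : Fin n, Odd (G.degree v)) :
    uC n G (Real.pi / 2) =
      (-Complex.I) ^ G.edgeFinset.card •
        ((List.finRange n).map (fun i => sigmaZ i)).prod := by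
  classical
  rw [uC, hamC_eq_diagonal, ← Matrix.diagonal_smul, Matrix.exp_diagonal, Pi.exp_def]
  simp_rw [sigmaZ_eq_diagonal]
  rw [prod_map_diagonal, ← Matrix.diagonal_smul]
  refine congrArg Matrix.diagonal (funext fun s => ?_)
  rw [← Complex.exp_eq_exp_ℂ]
  have hF : ((-Complex.I * ((Real.pi / 2 : ℝ) : ℂ)) • fun s : QIdx n =>
      ∑ e ∈ G.edgeFinset,
        Sym2.lift ⟨fun i j => pauliZ (s i) (s i) * pauliZ (s j) (s j),
          fun i j => mul_comm _ _⟩ e) s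
      = ∑ e ∈ G.edgeFinset, (-Complex.I * ((Real.pi / 2 : ℝ) : ℂ)) *
          Sym2.lift ⟨fun i j => pauliZ (s i) (s i) * pauliZ (s j) (s j),
            fun i j => mul_comm _ _⟩ e := by
    simp [Finset.mul_sum]
  rw [hF, Complex.exp_sum]
  have step : ∀ e ∈ G.edgeFinset,
      Complex.exp ((-Complex.I * ((Real.pi / 2 : ℝ) : ℂ)) *
        Sym2.lift ⟨fun i j => pauliZ (s i) (s i) * pauliZ (s j) (s j),
          fun i j => mul_comm _ _⟩ e)
      = -Complex.I * Sym2.lift ⟨fun i j => pauliZ (s i) (s i) * pauliZ (s j) (s j),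
          fun i j => mul_comm _ _⟩ e := fun e _ => exp_key _ (lift_pm s e)
  rw [Finset.prod_congr rfl step, Finset.prod_mul_distrib, Finset.prod_const,
    prod_edges G (fun i => pauliZ (s i) (s i))]
  have hdeg : (∏ v, pauliZ (s v) (s v) ^ G.degree v) = ∏ v, pauliZ (s v) (s v) := by
    refine Finset.prod_congr rfl fun v _ => ?_
    rcases pauliZ_diag_cases (s v) with h | h <;> rw [h]
    · rw [one_pow]
    · rw [(hodd v).neg_one_pow]
  rw [hdeg]
  simp [Pi.smul_apply, smul_eq_mul, Fin.prod_univ_def]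
end

section
/- Sandwich relation for odd-degree graphs: if every vertex of the graph G has odd degree, then for every β ∈ ℝ, exp(-i(π/2)H_C) · exp(iβH_B) · exp(-i(π/2)H_C) = (-1)^{|E|} · exp(-iβH_B), where |E| is the number of edges of G. -/
open Matrix Complex

noncomputable section AuxStmt18

open Matrix Complex

/-- Symmetry of the cut indicator. -/
lemma cutSym {n : ℕ} (s : QIdx n) (a b : Fin n) :
    (if s a = s b then (0 : ℕ) else 1) = (if s b = s a then (0 : ℕ) else 1) :=
  if_congr eq_comm rfl rfl

/-- Cut indicator of an edge. -/
def cutFn {n : ℕ} (s : QIdx n) : Sym2 (Fin n) → ℕ :=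
  Sym2.lift ⟨fun a b => if s a = s b then 0 else 1, cutSym s⟩

/-- Number of cut edges. -/
def cutCount {n : ℕ} (G : SimpleGraph (Fin n)) [DecidableRel G.Adj] (s : QIdx n) : ℕ :=
  ∑ e ∈ G.edgeFinset, cutFn s e

variable {n : ℕ} (G : SimpleGraph (Fin n)) [DecidableRel G.Adj]

lemma hamC_eq_diag :
    hamC n G = Matrix.diagonal
      (fun s : QIdx n => (G.edgeFinset.card : ℂ) - 2 * (cutCount G s : ℂ)) := by
  have hterm : ∀ e ∈ G.edgeFinset,
      Sym2.lift ⟨fun i j => sigmaZ i * sigmaZ j, fun i j => sigmaZ_mul_comm i j⟩ e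
        = Matrix.diagonal (fun s : QIdx n => (1 : ℂ) - 2 * (cutFn s e : ℂ)) := by
    intro e _
    induction e using Sym2.ind with
    | _ i j =>
      rw [Sym2.lift_mk]
      show sigmaZ i * sigmaZ j = _
      rw [sigmaZ_eq_diagonal, sigmaZ_eq_diagonal, Matrix.diagonal_mul_diagonal]
      refine congrArg Matrix.diagonal (funext fun s => ?_)
      have h2 : ∀ a b : Fin 2, pauliZ a a * pauliZ b b
          = (1 : ℂ) - 2 * (((if a = b then (0 : ℕ) else 1) : ℕ) : ℂ) := by
        intro a b
        fin_cases a <;> fin_cases b <;> norm_num [pauliZ]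
      simpa [cutFn, Sym2.lift_mk] using h2 (s i) (s j)
  rw [hamC, Finset.sum_congr rfl hterm]
  ext s t
  rw [Matrix.sum_apply]
  by_cases h : s = t
  · subst h
    simp only [Matrix.diagonal_apply_eq]
    rw [Finset.sum_sub_distrib, Finset.sum_const, nsmul_eq_mul, mul_one, ← Finset.mul_sum,
      ← Nat.cast_sum]
    rfl
  · simp [Matrix.diagonal_apply_ne _ h]

/-- The diagonal entries of `exp(-i(π/2)H_C)`. -/
def dEntry (s : QIdx n) : ℂ := (-Complex.I) ^ G.edgeFinset.card * (-1) ^ cutCount G s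

lemma exp_entry (c N : ℕ) :
    Complex.exp (-Complex.I * ((Real.pi / 2 : ℝ) : ℂ) * ((c : ℂ) - 2 * (N : ℂ)))
      = (-Complex.I) ^ c * (-1) ^ N := by
  have hI : Complex.exp (-(((Real.pi / 2 : ℝ) : ℂ) * Complex.I)) = -Complex.I := by
    rw [Complex.exp_neg, Complex.exp_mul_I, ← Complex.ofReal_cos, ← Complex.ofReal_sin,
      Real.cos_pi_div_two, Real.sin_pi_div_two]
    simp [Complex.inv_I]
  have hpi : Complex.exp (((Real.pi : ℝ) : ℂ) * Complex.I) = -1 := Complex.exp_pi_mul_I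
  have h1 : -Complex.I * ((Real.pi / 2 : ℝ) : ℂ) * ((c : ℂ) - 2 * (N : ℂ))
      = (c : ℂ) * (-(((Real.pi / 2 : ℝ) : ℂ) * Complex.I))
        + (N : ℂ) * (((Real.pi : ℝ) : ℂ) * Complex.I) := by
    push_cast
    ring
  rw [h1, Complex.exp_add, Complex.exp_nat_mul, Complex.exp_nat_mul, hI, hpi]

lemma uC_pi_div_two_eq : uC n G (Real.pi / 2) = Matrix.diagonal (dEntry G) := by
  rw [uC, hamC_eq_diag, ← Matrix.diagonal_smul, Matrix.exp_diagonal]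
  refine congrArg Matrix.diagonal (funext fun s => ?_)
  rw [Pi.coe_exp, Pi.smul_apply, smul_eq_mul, ← congrFun Complex.exp_eq_exp_ℂ _]
  exact exp_entry _ _

lemma cutCount_update (hodd : ∀ v : Fin n, Odd (G.degree v)) (s : QIdx n) (i : Fin n) :
    ((cutCount G s + cutCount G (Function.update s i (s i + 1)) : ℕ) : ZMod 2) = 1 := by
  have h2 : ((2 : ℕ) : ZMod 2) = 0 := by decide
  rw [cutCount, cutCount, ← Finset.sum_add_distrib, Nat.cast_sum]
  have per : ∀ e ∈ G.edgeFinset,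
      ((cutFn s e + cutFn (Function.update s i (s i + 1)) e : ℕ) : ZMod 2)
        = if i ∈ e then 1 else 0 := by
    intro e he
    induction e using Sym2.ind with
    | _ a b =>
      have hadj : G.Adj a b := by
        rwa [SimpleGraph.mem_edgeFinset, SimpleGraph.mem_edgeSet] at he
      have hab : a ≠ b := hadj.ne
      simp only [cutFn, Sym2.lift_mk, Sym2.mem_iff]
      by_cases hia : i = a
      · subst hia
        rw [Function.update_self, Function.update_of_ne (Ne.symm hab),
          if_pos (Or.inl rfl)]
        have hval : ∀ x y : Fin 2,
            ((if x = y then (0 : ℕ) else 1) + (if x + 1 = y then 0 else 1)) = 1 := by decide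
        rw [hval]
        exact Nat.cast_one
      · by_cases hib : i = b
        · subst hib
          rw [Function.update_self, Function.update_of_ne hab, if_pos (Or.inr rfl)]
          have hval : ∀ x y : Fin 2,
              ((if x = y then (0 : ℕ) else 1) + (if x = y + 1 then 0 else 1)) = 1 := by decide
          rw [hval]
          exact Nat.cast_one
        · rw [Function.update_of_ne (fun hh => hia hh.symm),
            Function.update_of_ne (fun hh => hib hh.symm),
            if_neg (show ¬(i = a ∨ i = b) from by push_neg; exact ⟨hia, hib⟩)]
          have : (if s a = s b then (0 : ℕ) else 1) + (if s a = s b then (0 : ℕ) else 1)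
              = 2 * (if s a = s b then (0 : ℕ) else 1) := by ring
          rw [this, Nat.cast_mul, h2, zero_mul]
  rw [Finset.sum_congr rfl per, Finset.sum_boole, ← SimpleGraph.incidenceFinset_eq_filter,
    SimpleGraph.card_incidenceFinset_eq_degree]
  obtain ⟨k, hk⟩ := hodd i
  rw [hk, Nat.cast_add, Nat.cast_mul, h2, zero_mul, zero_add, Nat.cast_one]

lemma dEntry_update (hodd : ∀ v : Fin n, Odd (G.degree v)) (s : QIdx n) (i : Fin n) :
    dEntry G s = - dEntry G (Function.update s i (s i + 1)) := by
  set t := Function.update s i (s i + 1) with ht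
  have hkey := cutCount_update G hodd s i
  rw [← ht] at hkey
  have hoddsum : Odd (cutCount G s + cutCount G t) := by
    rcases Nat.even_or_odd (cutCount G s + cutCount G t) with hev | hod
    · exfalso
      obtain ⟨k, hk⟩ := hev
      rw [hk, show k + k = 2 * k from (two_mul k).symm, Nat.cast_mul,
        show ((2 : ℕ) : ZMod 2) = 0 by decide, zero_mul] at hkey
      exact zero_ne_one hkey
    · exact hod
  have h1 : ((-1 : ℂ)) ^ (cutCount G s + cutCount G t) = -1 := Odd.neg_one_pow hoddsum
  rw [pow_add] at h1
  have h2 : ((-1 : ℂ)) ^ cutCount G t * (-1) ^ cutCount G t = 1 := by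
    rw [← pow_add]
    exact Even.neg_one_pow ⟨_, rfl⟩
  have hpow : ((-1 : ℂ)) ^ cutCount G s = -((-1 : ℂ) ^ cutCount G t) := by
    calc ((-1 : ℂ)) ^ cutCount G s
        = (-1) ^ cutCount G s * ((-1) ^ cutCount G t * (-1) ^ cutCount G t) := by
          rw [h2, mul_one]
      _ = ((-1) ^ cutCount G s * (-1) ^ cutCount G t) * (-1) ^ cutCount G t := by ring
      _ = -((-1 : ℂ) ^ cutCount G t) := by rw [h1]; ring
  rw [dEntry, dEntry, hpow]
  ring

lemma sigmaX_ne_zero_eq {i : Fin n} {s t : QIdx n} (h : sigmaX i s t ≠ 0) :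
    t = Function.update s i (s i + 1) := by
  simp only [sigmaX, pauliAt, Matrix.of_apply] at h
  have h' := Finset.prod_ne_zero_iff.mp h
  funext j
  by_cases hj : j = i
  · subst hj
    have hthis := h' j (Finset.mem_univ j)
    rw [if_pos rfl] at hthis
    rw [Function.update_self]
    have hx : ∀ a b : Fin 2, pauliX a b ≠ 0 → b = a + 1 := by
      intro a b hab
      fin_cases a <;> fin_cases b <;>
        first
          | rfl
          | (exfalso; apply hab; norm_num [pauliX])
          | decide
    exact hx _ _ hthis
  · have hthis := h' j (Finset.mem_univ j)
    rw [if_neg hj] at hthis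
    rw [Function.update_of_ne hj]
    by_cases hst : s j = t j
    · exact hst.symm
    · rw [if_neg hst] at hthis
      exact absurd rfl hthis

lemma diag_anticomm (hodd : ∀ v : Fin n, Odd (G.degree v)) (i : Fin n) :
    Matrix.diagonal (dEntry G) * sigmaX i = -(sigmaX i * Matrix.diagonal (dEntry G)) := by
  ext s t
  rw [Matrix.diagonal_mul, Matrix.neg_apply, Matrix.mul_diagonal]
  by_cases h : sigmaX i s t = 0
  · rw [h]; ring
  · have ht := sigmaX_ne_zero_eq h
    subst ht
    rw [dEntry_update G hodd s i]
    ring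

lemma diag_anticomm_hamB (hodd : ∀ v : Fin n, Odd (G.degree v)) :
    Matrix.diagonal (dEntry G) * hamB n = (-(hamB n)) * Matrix.diagonal (dEntry G) := by
  rw [hamB, neg_neg, mul_neg, Finset.mul_sum,
    Finset.sum_congr rfl (fun i _ => diag_anticomm G hodd i),
    ← Finset.sum_neg_distrib]
  simp only [neg_neg]
  rw [Finset.sum_mul]

lemma diag_sq :
    Matrix.diagonal (dEntry G) * Matrix.diagonal (dEntry G)
      = ((-1 : ℂ) ^ G.edgeFinset.card) • (1 : Matrix (QIdx n) (QIdx n) ℂ) := by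
  rw [Matrix.diagonal_mul_diagonal]
  have hval : ∀ s : QIdx n, dEntry G s * dEntry G s = (-1 : ℂ) ^ G.edgeFinset.card := by
    intro s
    rw [dEntry, mul_mul_mul_comm, ← mul_pow, ← mul_pow, neg_mul_neg, Complex.I_mul_I,
      neg_mul_neg, one_mul, one_pow, mul_one]
  ext s t
  by_cases h : s = t
  · subst h
    simp [Matrix.diagonal_apply_eq, hval, Matrix.smul_apply, Matrix.one_apply_eq]
  · simp [Matrix.diagonal_apply_ne _ h, Matrix.one_apply_ne h, Matrix.smul_apply]

end AuxStmt18

/-- sandwich relation for odd-degree graphs: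
`exp(-i(π/2)H_C) exp(iβH_B) exp(-i(π/2)H_C) = (-1)^|E| exp(-iβH_B)`. -/
theorem stmt18 (n : ℕ) (hn : 1 ≤ n) (G : SimpleGraph (Fin n)) [DecidableRel G.Adj]
    (hodd : ∀ v : Fin n, Odd (G.degree v)) (β : ℝ) :
    uC n G (Real.pi / 2) * NormedSpace.exp ((Complex.I * (β : ℂ)) • hamB n) *
        uC n G (Real.pi / 2) =
      ((-1 : ℂ)) ^ G.edgeFinset.card • uB n β := by
  classical
  have hcc : ((-1 : ℂ) ^ G.edgeFinset.card) * ((-1 : ℂ) ^ G.edgeFinset.card) = 1 := by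
    rw [← pow_add]
    exact Even.neg_one_pow ⟨_, rfl⟩
  set D := Matrix.diagonal (dEntry G) with hD_def
  have hDD := diag_sq G
  have hDH := diag_anticomm_hamB G hodd
  have huC : uC n G (Real.pi / 2) = D := uC_pi_div_two_eq G
  have hDinv : D * (((-1 : ℂ) ^ G.edgeFinset.card) • D) = 1 := by
    rw [Matrix.mul_smul, hDD, smul_smul, hcc, one_smul]
  have hDinv' : (((-1 : ℂ) ^ G.edgeFinset.card) • D) * D = 1 := by
    rw [Matrix.smul_mul, hDD, smul_smul, hcc, one_smul]
  let u : (Matrix (QIdx n) (QIdx n) ℂ)ˣ :=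
    ⟨D, ((-1 : ℂ) ^ G.edgeFinset.card) • D, hDinv, hDinv'⟩
  have hconj : (↑u : Matrix (QIdx n) (QIdx n) ℂ) * ((Complex.I * (β : ℂ)) • hamB n) * (↑(u⁻¹) : Matrix (QIdx n) (QIdx n) ℂ)
      = (-Complex.I * (β : ℂ)) • hamB n := by
    show D * ((Complex.I * (β : ℂ)) • hamB n) * (((-1 : ℂ) ^ G.edgeFinset.card) • D)
      = (-Complex.I * (β : ℂ)) • hamB n
    rw [Matrix.mul_smul, Matrix.mul_smul, Matrix.smul_mul, hDH, Matrix.mul_assoc, hDD,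
      Matrix.mul_smul, Matrix.mul_one, smul_smul, smul_smul]
    have hscal : (-1 : ℂ) ^ G.edgeFinset.card * (Complex.I * (β : ℂ))
        * (-1 : ℂ) ^ G.edgeFinset.card = Complex.I * (β : ℂ) := by
      calc (-1 : ℂ) ^ G.edgeFinset.card * (Complex.I * (β : ℂ))
            * (-1 : ℂ) ^ G.edgeFinset.card
          = ((-1 : ℂ) ^ G.edgeFinset.card * (-1 : ℂ) ^ G.edgeFinset.card)
              * (Complex.I * (β : ℂ)) := by ring
        _ = Complex.I * (β : ℂ) := by rw [hcc, one_mul]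
    rw [hscal, smul_neg, ← neg_smul, ← neg_mul]
  have hexp := Matrix.exp_units_conj u ((Complex.I * (β : ℂ)) • hamB n)
  rw [hconj] at hexp
  have hcoe : (↑u : Matrix (QIdx n) (QIdx n) ℂ)
      * NormedSpace.exp ((Complex.I * (β : ℂ)) • hamB n) * (↑(u⁻¹) : Matrix (QIdx n) (QIdx n) ℂ)
      = ((-1 : ℂ) ^ G.edgeFinset.card)
        • (D * NormedSpace.exp ((Complex.I * (β : ℂ)) • hamB n) * D) := by
    show D * NormedSpace.exp ((Complex.I * (β : ℂ)) • hamB n)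
        * (((-1 : ℂ) ^ G.edgeFinset.card) • D) = _
    rw [Matrix.mul_smul]
  rw [hcoe] at hexp
  rw [huC, uB]
  calc D * NormedSpace.exp ((Complex.I * (β : ℂ)) • hamB n) * D
      = (((-1 : ℂ) ^ G.edgeFinset.card) * ((-1 : ℂ) ^ G.edgeFinset.card))
          • (D * NormedSpace.exp ((Complex.I * (β : ℂ)) • hamB n) * D) := by
        rw [hcc, one_smul]
    _ = ((-1 : ℂ) ^ G.edgeFinset.card) • (((-1 : ℂ) ^ G.edgeFinset.card)
          • (D * NormedSpace.exp ((Complex.I * (β : ℂ)) • hamB n) * D)) := by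
        rw [smul_smul]
    _ = ((-1 : ℂ) ^ G.edgeFinset.card)
          • NormedSpace.exp ((-Complex.I * (β : ℂ)) • hamB n) := by rw [← hexp]
end
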